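/- arXiv:1106.2735 — 6 statements merged into one kernel-verified Lean document; each statement's English description precedes it below -/
import Mathlib

section
/- Let A be an n x n positive semidefinite symmetric matrix and let B be the 2n x 2n symmetric matrix with zero diagonal blocks and off-diagonal blocks A/2 (i.e., B = [[0, A/2],[A/2, 0]]). Then max_{Z in E_{2n}} <B, Z> = max_{X in E_n} <A, X>, and max_{z in {-1,1}^{2n}} z^T B z = max_{x in {-1,1}^n} x^T A x. -/
open Finset Real
open scoped Classical Pointwise

noncomputable section

variable {V : Type*} [Fintype V] [LinearOrder V]

/-- Sum over the edges of `G` (pairs `i < j` with `G.Adj i j`) of `w i j * x i j`. -/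
def edgeSum (G : SimpleGraph V) (w : V → V → ℝ) (x : V → V → ℝ) : ℝ :=
  ∑ i, ∑ j, if i < j ∧ G.Adj i j then w i j * x i j else 0

/-- `ip(G,w)`: maximum of `∑_{ij ∈ E} w_ij x_i x_j` over `x ∈ {±1}^V`. -/
def ipVal (G : SimpleGraph V) (w : V → V → ℝ) : ℝ :=
  sSup {t | ∃ x : V → ℝ, (∀ i, x i = 1 ∨ x i = -1) ∧
    t = edgeSum G w (fun i j => x i * x j)}

/-- `sdp(G,w)`: maximum of `∑_{ij ∈ E} w_ij ⟪u_i,u_j⟫` over unit vectors. -/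
def sdpVal (G : SimpleGraph V) (w : V → V → ℝ) : ℝ :=
  sSup {t | ∃ u : V → EuclideanSpace ℝ V, (∀ i, ‖u i‖ = 1) ∧
    t = edgeSum G w (fun i j => (inner ℝ (u i) (u j) : ℝ))}

/-- The Grothendieck constant `κ(G) = sup_w sdp(G,w)/ip(G,w)`. -/
def kappaVal (G : SimpleGraph V) : ℝ :=
  sSup {t | ∃ w : V → V → ℝ, t = sdpVal G w / ipVal G w}

/-- The elliptope: PSD matrices with unit diagonal. -/
def elliptope (V : Type*) [Fintype V] : Set (Matrix V V ℝ) :=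
  {X | X.PosSemidef ∧ ∀ i, X i i = 1}

/-- The cut polytope: convex hull of rank-one ±1 correlation matrices. -/
def cutPolytope (V : Type*) [Fintype V] : Set (Matrix V V ℝ) :=
  convexHull ℝ {X | ∃ x : V → ℝ, (∀ i, x i = 1 ∨ x i = -1) ∧
    X = Matrix.of fun i j => x i * x j}

/-- Projection of a matrix onto the edge set of `G`. -/
def projE (G : SimpleGraph V) (X : Matrix V V ℝ) : V → V → ℝ :=
  fun i j => if G.Adj i j then X i j else 0

/-- `𝓔(G)`: projection of the elliptope onto the edge set of `G`. -/
def ellG (G : SimpleGraph V) : Set (V → V → ℝ) := projE G '' elliptope V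

/-- `CUT(G)`: projection of the cut polytope onto the edge set of `G`. -/
def cutG (G : SimpleGraph V) : Set (V → V → ℝ) := projE G '' cutPolytope V

end

section Helpers
open Matrix
open scoped MatrixOrder

variable {m : Type*} [Fintype m]

lemma quadform_eq' (M : Matrix m m ℝ) (x : m → ℝ) :
    star x ⬝ᵥ M *ᵥ x = ∑ i, ∑ j, x i * (M i j * x j) := by
  simp [dotProduct, Matrix.mulVec, Finset.mul_sum]

lemma psd_quad' {M : Matrix m m ℝ} (hM : M.PosSemidef) (x : m → ℝ) :
    0 ≤ ∑ i, ∑ j, x i * (M i j * x j) := by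
  rw [← quadform_eq']; exact hM.dotProduct_mulVec_nonneg x

lemma inner_psd_nonneg' {n : ℕ} {A M : Matrix (Fin n) (Fin n) ℝ} (hA : A.PosSemidef)
    (hM : ∀ x : Fin n → ℝ, 0 ≤ ∑ i, ∑ j, x i * (M i j * x j)) :
    0 ≤ ∑ i, ∑ j, A i j * M i j := by
  obtain ⟨C, rfl⟩ : ∃ C : Matrix (Fin n) (Fin n) ℝ, A = Cᴴ * C :=
    CStarAlgebra.nonneg_iff_eq_star_mul_self.mp hA.nonneg
  have key : ∑ i, ∑ j, (Cᴴ * C) i j * M i j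
      = ∑ k, ∑ i, ∑ j, C k i * (M i j * C k j) := by
    simp only [Matrix.mul_apply, Matrix.conjTranspose_apply, star_trivial, Finset.sum_mul]
    calc ∑ i, ∑ j, ∑ k, C k i * C k j * M i j
        = ∑ i, ∑ k, ∑ j, C k i * C k j * M i j :=
          Finset.sum_congr rfl fun _ _ => Finset.sum_comm
      _ = ∑ k, ∑ i, ∑ j, C k i * C k j * M i j := Finset.sum_comm
      _ = ∑ k, ∑ i, ∑ j, C k i * (M i j * C k j) :=
          Finset.sum_congr rfl fun k _ => Finset.sum_congr rfl fun i _ =>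
            Finset.sum_congr rfl fun j _ => by ring
  rw [key]
  exact Finset.sum_nonneg fun k _ => hM fun i => C k i

lemma sum_sum_elim' {n : ℕ} (g : (Fin n ⊕ Fin n) → (Fin n ⊕ Fin n) → ℝ) :
    ∑ a, ∑ b, g a b = ∑ i, ∑ j,
      (g (Sum.inl i) (Sum.inl j) + g (Sum.inl i) (Sum.inr j)
        + g (Sum.inr i) (Sum.inl j) + g (Sum.inr i) (Sum.inr j)) := by
  rw [Fintype.sum_sum_type]
  simp only [Fintype.sum_sum_type, Finset.sum_add_distrib]
  ring

lemma sSup_eq_of' {S T : Set ℝ} (hS : S.Nonempty) (hTb : BddAbove T)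
    (h1 : ∀ s ∈ S, ∃ t ∈ T, s ≤ t) (h2 : ∀ t ∈ T, ∃ s ∈ S, t ≤ s) :
    sSup S = sSup T := by
  have hT : T.Nonempty := by
    obtain ⟨s, hs⟩ := hS; obtain ⟨t, ht, -⟩ := h1 s hs; exact ⟨t, ht⟩
  have hSb : BddAbove S := ⟨sSup T, fun s hs => by
    obtain ⟨t, ht, hle⟩ := h1 s hs; exact hle.trans (le_csSup hTb ht)⟩
  refine le_antisymm (csSup_le hS fun s hs => ?_) (csSup_le hT fun t ht => ?_)
  · obtain ⟨t, ht, hle⟩ := h1 s hs; exact hle.trans (le_csSup hTb ht)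
  · obtain ⟨s, hs, hle⟩ := h2 t ht; exact hle.trans (le_csSup hSb hs)

lemma elliptope_abs_le' {n : ℕ} {X : Matrix (Fin n) (Fin n) ℝ}
    (hX : X.PosSemidef) (hd : ∀ i, X i i = 1) (i j : Fin n) : |X i j| ≤ 1 := by
  rcases eq_or_ne i j with rfl | hij
  · rw [hd i]; norm_num
  · have hsym : X j i = X i j := by
      have := hX.1.apply j i; simpa using this.symm
    have key : ∀ c : ℝ, c = 1 ∨ c = -1 → 0 ≤ 2 + 2 * (c * X i j) := by
      intro c hc
      have h := psd_quad' hX (fun a => (if a = i then (1:ℝ) else 0) + (if a = j then c else 0))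
      have hval : (∑ a, ∑ b, ((if a = i then (1:ℝ) else 0) + (if a = j then c else 0)) *
          (X a b * ((if b = i then (1:ℝ) else 0) + (if b = j then c else 0))))
          = 2 + 2 * (c * X i j) := by
        simp only [add_mul, mul_add, mul_ite, ite_mul, one_mul, mul_one, zero_mul, mul_zero,
          Finset.sum_add_distrib, Finset.sum_ite_eq', Finset.mem_univ, if_true]
        simp [hij, Ne.symm hij, hd, hsym]
        rcases hc with rfl | rfl <;> ring
      linarith [h, hval.le, hval.symm.le]
    have h1 := key 1 (Or.inl rfl)
    have h2 := key (-1) (Or.inr rfl)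
    rw [abs_le]; constructor <;> nlinarith

end Helpers

/-- for `A ⪰ 0` and `B = [[0, A/2],[A/2, 0]]`, the maxima of
`⟨B,Z⟩` over `𝓔_{2n}` and of `⟨A,X⟩` over `𝓔_n` coincide, and likewise
for the ±1 quadratic maxima. -/
theorem block_matrix_lemma {n : ℕ} (A : Matrix (Fin n) (Fin n) ℝ)
    (hA : A.PosSemidef)
    (B : Matrix (Fin n ⊕ Fin n) (Fin n ⊕ Fin n) ℝ)
    (hB : B = Matrix.fromBlocks 0 ((1 / 2 : ℝ) • A) ((1 / 2 : ℝ) • A) 0) :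
    sSup {t | ∃ Z ∈ elliptope (Fin n ⊕ Fin n), t = ∑ i, ∑ j, B i j * Z i j} =
      sSup {t | ∃ X ∈ elliptope (Fin n), t = ∑ i, ∑ j, A i j * X i j} ∧
    sSup {t | ∃ z : Fin n ⊕ Fin n → ℝ, (∀ i, z i = 1 ∨ z i = -1) ∧
        t = ∑ i, ∑ j, z i * (B i j * z j)} =
      sSup {t | ∃ x : Fin n → ℝ, (∀ i, x i = 1 ∨ x i = -1) ∧
        t = ∑ i, ∑ j, x i * (A i j * x j)} := by
  subst hB
  have hAsym : ∀ i j, A j i = A i j := fun i j => by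
    have := hA.1.apply j i; simpa using this.symm
  constructor
  · -- SDP part
    apply sSup_eq_of'
    · -- nonempty
      exact ⟨_, ⟨1, ⟨Matrix.PosSemidef.one, fun i => Matrix.one_apply_eq i⟩, rfl⟩⟩
    · -- BddAbove
      refine ⟨∑ i, ∑ j, |A i j|, ?_⟩
      rintro t ⟨X, ⟨hXpsd, hXd⟩, rfl⟩
      refine Finset.sum_le_sum fun i _ => Finset.sum_le_sum fun j _ => ?_
      calc A i j * X i j ≤ |A i j * X i j| := le_abs_self _
        _ = |A i j| * |X i j| := abs_mul _ _
        _ ≤ |A i j| * 1 := by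
            exact mul_le_mul_of_nonneg_left (elliptope_abs_le' hXpsd hXd i j) (abs_nonneg _)
        _ = |A i j| := mul_one _
    · -- forward: every value over E_{2n} is dominated
      rintro s ⟨Z, ⟨hZpsd, hZd⟩, rfl⟩
      set P : Matrix (Fin n) (Fin n) ℝ := Z.submatrix Sum.inl Sum.inl with hP
      set R : Matrix (Fin n) (Fin n) ℝ := Z.submatrix Sum.inr Sum.inr with hR
      set p := ∑ i, ∑ j, A i j * P i j with hp
      set r := ∑ i, ∑ j, A i j * R i j with hr
      have hPmem : P ∈ elliptope (Fin n) :=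
        ⟨hZpsd.submatrix Sum.inl, fun i => hZd (Sum.inl i)⟩
      have hRmem : R ∈ elliptope (Fin n) :=
        ⟨hZpsd.submatrix Sum.inr, fun i => hZd (Sum.inr i)⟩
      set q := ∑ i, ∑ j, A i j * (Z (Sum.inl i) (Sum.inr j) + Z (Sum.inr i) (Sum.inl j)) with hq
      have hs : (∑ a, ∑ b,
          (Matrix.fromBlocks 0 ((1 / 2 : ℝ) • A) ((1 / 2 : ℝ) • A) 0) a b * Z a b) = q / 2 := by
        rw [sum_sum_elim', hq, Finset.sum_div]
        refine Finset.sum_congr rfl fun i _ => ?_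
        rw [Finset.sum_div]
        refine Finset.sum_congr rfl fun j _ => ?_
        simp [Matrix.fromBlocks_apply₁₁, Matrix.fromBlocks_apply₁₂, Matrix.fromBlocks_apply₂₁,
          Matrix.fromBlocks_apply₂₂]
        ring
      have hkey : 0 ≤ p + r - q := by
        have hM : ∀ x : Fin n → ℝ, 0 ≤ ∑ i, ∑ j, x i *
            ((P i j + R i j - (Z (Sum.inl i) (Sum.inr j) + Z (Sum.inr i) (Sum.inl j))) * x j) := by
          intro x
          have h := psd_quad' hZpsd (Sum.elim x (-x))
          rw [sum_sum_elim'] at h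
          refine le_of_le_of_eq h (Finset.sum_congr rfl fun i _ =>
            Finset.sum_congr rfl fun j _ => ?_)
          simp only [Sum.elim_inl, Sum.elim_inr, Pi.neg_apply, hP, hR, Matrix.submatrix_apply]
          ring
        have h0 := inner_psd_nonneg' hA hM
        have hsplit : (∑ i, ∑ j, A i j *
            ((P i j + R i j - (Z (Sum.inl i) (Sum.inr j) + Z (Sum.inr i) (Sum.inl j))))) =
            p + r - q := by
          rw [hp, hr, hq]
          simp only [mul_add, mul_sub, Finset.sum_add_distrib, Finset.sum_sub_distrib]
        linarith [h0, hsplit.le, hsplit.symm.le]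
      rcases le_total p r with hle | hle
      · exact ⟨r, ⟨R, hRmem, rfl⟩, by rw [hs]; linarith⟩
      · exact ⟨p, ⟨P, hPmem, rfl⟩, by rw [hs]; linarith⟩
    · -- backward: every value over E_n is attained
      rintro t ⟨X, ⟨hXpsd, hXd⟩, rfl⟩
      refine ⟨_, ⟨X.submatrix (Sum.elim id id) (Sum.elim id id),
        ⟨hXpsd.submatrix _, fun i => by cases i <;> simp [hXd]⟩, rfl⟩, ?_⟩
      rw [sum_sum_elim']
      refine le_of_eq (Finset.sum_congr rfl fun i _ => Finset.sum_congr rfl fun j _ => ?_).symm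
      simp [Matrix.fromBlocks_apply₁₁, Matrix.fromBlocks_apply₁₂, Matrix.fromBlocks_apply₂₁,
        Matrix.fromBlocks_apply₂₂, Matrix.submatrix_apply]
      ring
  · -- ±1 part
    apply sSup_eq_of'
    · exact ⟨_, ⟨fun _ => 1, fun i => Or.inl rfl, rfl⟩⟩
    · refine ⟨∑ i, ∑ j, |A i j|, ?_⟩
      rintro t ⟨x, hx, rfl⟩
      have hxa : ∀ i, |x i| = 1 := fun i => by rcases hx i with h | h <;> simp [h]
      refine Finset.sum_le_sum fun i _ => Finset.sum_le_sum fun j _ => ?_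
      calc x i * (A i j * x j) ≤ |x i * (A i j * x j)| := le_abs_self _
        _ = |A i j| := by rw [abs_mul, abs_mul, hxa, hxa, one_mul, mul_one]
    · rintro s ⟨z, hz, rfl⟩
      set x : Fin n → ℝ := fun i => z (Sum.inl i) with hxdef
      set y : Fin n → ℝ := fun i => z (Sum.inr i) with hydef
      set p := ∑ i, ∑ j, x i * (A i j * x j) with hp
      set r := ∑ i, ∑ j, y i * (A i j * y j) with hr
      set c := ∑ i, ∑ j, x i * (A i j * y j) with hc
      set c' := ∑ i, ∑ j, y i * (A i j * x j) with hc'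
      have hs : (∑ a, ∑ b, z a *
          ((Matrix.fromBlocks 0 ((1 / 2 : ℝ) • A) ((1 / 2 : ℝ) • A) 0) a b * z b))
          = (c + c') / 2 := by
        rw [sum_sum_elim', hc, hc', ← Finset.sum_add_distrib, Finset.sum_div]
        refine Finset.sum_congr rfl fun i _ => ?_
        rw [← Finset.sum_add_distrib, Finset.sum_div]
        refine Finset.sum_congr rfl fun j _ => ?_
        simp [Matrix.fromBlocks_apply₁₁, Matrix.fromBlocks_apply₁₂, Matrix.fromBlocks_apply₂₁,
          Matrix.fromBlocks_apply₂₂, hxdef, hydef]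
        ring
      have hkey : 0 ≤ p + r - (c + c') := by
        have h := psd_quad' hA (x - y)
        have hsplit : (∑ i, ∑ j, (x - y) i * (A i j * (x - y) j)) = p + r - (c + c') := by
          rw [hp, hr, hc, hc']
          simp only [Pi.sub_apply, mul_sub, sub_mul, Finset.sum_sub_distrib]
          ring
        linarith [h, hsplit.le, hsplit.symm.le]
      rcases le_total p r with hle | hle
      · exact ⟨r, ⟨y, fun i => hz (Sum.inr i), rfl⟩, by rw [hs]; linarith⟩
      · exact ⟨p, ⟨x, fun i => hz (Sum.inl i), rfl⟩, by rw [hs]; linarith⟩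
    · rintro t ⟨x, hx, rfl⟩
      refine ⟨_, ⟨Sum.elim x x, fun i => by cases i <;> simp [hx], rfl⟩, ?_⟩
      rw [sum_sum_elim']
      refine le_of_eq (Finset.sum_congr rfl fun i _ => Finset.sum_congr rfl fun j _ => ?_).symm
      simp [Matrix.fromBlocks_apply₁₁, Matrix.fromBlocks_apply₁₂, Matrix.fromBlocks_apply₂₁,
        Matrix.fromBlocks_apply₂₂]
      ring
end

section
/- If the graph G is the clique k-sum of graphs G1 and G2 with k <= 3, then kappa(G) = max(kappa(G1), kappa(G2)). -/
open Finset Real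
open scoped Classical Pointwise

section Aux
set_option linter.unusedSectionVars false

variable {V : Type*} [Fintype V] [LinearOrder V]

/-- predicate: ±1 vector -/
def pmVec (x : V → ℝ) : Prop := ∀ i, x i = 1 ∨ x i = -1

lemma pmVec.abs_mul_le {x : V → ℝ} (hx : pmVec x) (i j : V) : |x i * x j| ≤ 1 := by
  rcases hx i with h | h <;> rcases hx j with h' | h' <;> simp [h, h']

lemma pmVec.neg {x : V → ℝ} (hx : pmVec x) : pmVec (fun i => - x i) := by
  intro i; rcases hx i with h | h <;> simp [h]

lemma pmVec.one : pmVec (fun _ : V => (1:ℝ)) := fun _ => Or.inl rfl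

lemma edgeSum_le_sum_abs (G : SimpleGraph V) (w : V → V → ℝ) {y : V → V → ℝ}
    (hy : ∀ i j, i < j → G.Adj i j → |y i j| ≤ 1) :
    edgeSum G w y ≤ ∑ i, ∑ j, |w i j| := by
  refine Finset.sum_le_sum fun i _ => Finset.sum_le_sum fun j _ => ?_
  by_cases h : i < j ∧ G.Adj i j
  · simp only [h, if_true]
    calc w i j * y i j ≤ |w i j * y i j| := le_abs_self _
      _ = |w i j| * |y i j| := abs_mul _ _
      _ ≤ |w i j| * 1 := by
          exact mul_le_mul_of_nonneg_left (hy i j h.1 h.2) (abs_nonneg _)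
      _ = |w i j| := mul_one _
  · simp only [h, if_false]; positivity

/-- membership bound for ipVal -/
lemma ipSet_nonempty (G : SimpleGraph V) (w : V → V → ℝ) :
    Set.Nonempty {t | ∃ x : V → ℝ, (∀ i, x i = 1 ∨ x i = -1) ∧
      t = edgeSum G w (fun i j => x i * x j)} :=
  ⟨_, ⟨fun _ => 1, pmVec.one, rfl⟩⟩

lemma ipSet_bddAbove (G : SimpleGraph V) (w : V → V → ℝ) :
    BddAbove {t | ∃ x : V → ℝ, (∀ i, x i = 1 ∨ x i = -1) ∧
      t = edgeSum G w (fun i j => x i * x j)} := by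
  refine ⟨∑ i, ∑ j, |w i j|, fun t ht => ?_⟩
  obtain ⟨x, hx, rfl⟩ := ht
  exact edgeSum_le_sum_abs G w (fun i j _ _ => pmVec.abs_mul_le hx i j)

lemma le_ipVal (G : SimpleGraph V) (w : V → V → ℝ) {x : V → ℝ} (hx : pmVec x) :
    edgeSum G w (fun i j => x i * x j) ≤ ipVal G w :=
  le_csSup (ipSet_bddAbove G w) ⟨x, hx, rfl⟩

lemma ipVal_le (G : SimpleGraph V) (w : V → V → ℝ) {B : ℝ}
    (h : ∀ x : V → ℝ, pmVec x → edgeSum G w (fun i j => x i * x j) ≤ B) :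
    ipVal G w ≤ B := by
  refine csSup_le (ipSet_nonempty G w) ?_
  rintro t ⟨x, hx, rfl⟩; exact h x hx

lemma sdpSet_nonempty (G : SimpleGraph V) (w : V → V → ℝ) :
    Set.Nonempty {t | ∃ u : V → EuclideanSpace ℝ V, (∀ i, ‖u i‖ = 1) ∧
      t = edgeSum G w (fun i j => (inner ℝ (u i) (u j) : ℝ))} := by
  refine ⟨_, ⟨fun i => EuclideanSpace.single i (1:ℝ), fun i => ?_, rfl⟩⟩
  simp [EuclideanSpace.norm_single]

lemma sdpSet_bddAbove (G : SimpleGraph V) (w : V → V → ℝ) :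
    BddAbove {t | ∃ u : V → EuclideanSpace ℝ V, (∀ i, ‖u i‖ = 1) ∧
      t = edgeSum G w (fun i j => (inner ℝ (u i) (u j) : ℝ))} := by
  refine ⟨∑ i, ∑ j, |w i j|, fun t ht => ?_⟩
  obtain ⟨u, hu, rfl⟩ := ht
  refine edgeSum_le_sum_abs G w (fun i j _ _ => ?_)
  calc |(inner ℝ (u i) (u j) : ℝ)| ≤ ‖u i‖ * ‖u j‖ := abs_real_inner_le_norm _ _
    _ = 1 := by rw [hu i, hu j, one_mul]

lemma le_sdpVal (G : SimpleGraph V) (w : V → V → ℝ) {u : V → EuclideanSpace ℝ V}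
    (hu : ∀ i, ‖u i‖ = 1) :
    edgeSum G w (fun i j => (inner ℝ (u i) (u j) : ℝ)) ≤ sdpVal G w :=
  le_csSup (sdpSet_bddAbove G w) ⟨u, hu, rfl⟩

lemma sdpVal_le (G : SimpleGraph V) (w : V → V → ℝ) {B : ℝ}
    (h : ∀ u : V → EuclideanSpace ℝ V, (∀ i, ‖u i‖ = 1) →
      edgeSum G w (fun i j => (inner ℝ (u i) (u j) : ℝ)) ≤ B) :
    sdpVal G w ≤ B := by
  refine csSup_le (sdpSet_nonempty G w) ?_
  rintro t ⟨u, hu, rfl⟩; exact h u hu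

end Aux
section Aux2
set_option linter.unusedSectionVars false

variable {V : Type*} [Fintype V] [LinearOrder V]

lemma edgeSum_add_w (G : SimpleGraph V) (w w' y : V → V → ℝ) :
    edgeSum G (fun i j => w i j + w' i j) y = edgeSum G w y + edgeSum G w' y := by
  unfold edgeSum
  rw [← Finset.sum_add_distrib]
  refine Finset.sum_congr rfl fun i _ => ?_
  rw [← Finset.sum_add_distrib]
  refine Finset.sum_congr rfl fun j _ => ?_
  by_cases h : i < j ∧ G.Adj i j <;> simp [h, add_mul]

lemma edgeSum_sub_w (G : SimpleGraph V) (w w' y : V → V → ℝ) :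
    edgeSum G (fun i j => w i j - w' i j) y = edgeSum G w y - edgeSum G w' y := by
  unfold edgeSum
  rw [← Finset.sum_sub_distrib]
  refine Finset.sum_congr rfl fun i _ => ?_
  rw [← Finset.sum_sub_distrib]
  refine Finset.sum_congr rfl fun j _ => ?_
  by_cases h : i < j ∧ G.Adj i j <;> simp [h, sub_mul]

lemma edgeSum_congr_w (G : SimpleGraph V) {w w' : V → V → ℝ} (y : V → V → ℝ)
    (h : ∀ i j, i < j → G.Adj i j → w i j = w' i j) :
    edgeSum G w y = edgeSum G w' y := by
  refine Finset.sum_congr rfl fun i _ => Finset.sum_congr rfl fun j _ => ?_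
  by_cases hc : i < j ∧ G.Adj i j
  · simp only [hc, and_self, if_true]
    rw [h i j hc.1 hc.2]
  · simp [hc]

lemma edgeSum_congr_y (G : SimpleGraph V) (w : V → V → ℝ) {y y' : V → V → ℝ}
    (h : ∀ i j, i < j → G.Adj i j → y i j = y' i j) :
    edgeSum G w y = edgeSum G w y' := by
  refine Finset.sum_congr rfl fun i _ => Finset.sum_congr rfl fun j _ => ?_
  by_cases hc : i < j ∧ G.Adj i j
  · simp only [hc, and_self, if_true]
    rw [h i j hc.1 hc.2]
  · simp [hc]

/-- if two graphs agree on the support of `w`, the edge sums agree -/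
lemma edgeSum_congr_graph {G G' : SimpleGraph V} (w y : V → V → ℝ)
    (h : ∀ i j, i < j → w i j ≠ 0 → (G.Adj i j ↔ G'.Adj i j)) :
    edgeSum G w y = edgeSum G' w y := by
  refine Finset.sum_congr rfl fun i _ => Finset.sum_congr rfl fun j _ => ?_
  by_cases hij : i < j
  · by_cases hw : w i j = 0
    · by_cases h1 : i < j ∧ G.Adj i j <;> by_cases h2 : i < j ∧ G'.Adj i j <;>
        simp [h1, h2, hw]
    · simp only [h i j hij hw]
  · simp [hij]

lemma edgeSum_neg_x (G : SimpleGraph V) (w : V → V → ℝ) (x : V → ℝ) :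
    edgeSum G w (fun i j => (-x i) * (-x j)) = edgeSum G w (fun i j => x i * x j) := by
  refine edgeSum_congr_y G w fun i j _ _ => ?_
  ring

/-- edge sums only depend on the vertex values inside a vertex-support of `G` -/
lemma edgeSum_vertex_congr {G : SimpleGraph V} {S : Finset V}
    (hS : ∀ i j, G.Adj i j → i ∈ S ∧ j ∈ S) (w : V → V → ℝ) {x x' : V → ℝ}
    (h : ∀ i ∈ S, x i = x' i) :
    edgeSum G w (fun i j => x i * x j) = edgeSum G w (fun i j => x' i * x' j) := by
  refine edgeSum_congr_y G w fun i j _ hadj => ?_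
  rw [h i (hS i j hadj).1, h j (hS i j hadj).2]

/-- splitting an edge sum over a sup of two graphs -/
lemma edgeSum_sup_split (G₁ G₂ : SimpleGraph V) (w y : V → V → ℝ) :
    edgeSum (G₁ ⊔ G₂) w y =
      edgeSum G₁ (fun i j => if G₁.Adj i j then w i j else 0) y +
      edgeSum G₂ (fun i j => if G₂.Adj i j ∧ ¬ G₁.Adj i j then w i j else 0) y := by
  unfold edgeSum
  rw [← Finset.sum_add_distrib]
  refine Finset.sum_congr rfl fun i _ => ?_
  rw [← Finset.sum_add_distrib]
  refine Finset.sum_congr rfl fun j _ => ?_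
  by_cases hij : i < j
  · by_cases h1 : G₁.Adj i j <;> by_cases h2 : G₂.Adj i j <;>
      simp [hij, h1, h2, SimpleGraph.sup_adj]
  · simp [hij]

/-- an edge sum of a weight supported on a single (adjacent) pair -/
lemma edgeSum_pair (G : SimpleGraph V) {a b : V} (hab : a ≠ b) (hadj : G.Adj a b)
    (γ : ℝ) (x : V → ℝ) :
    edgeSum G (fun i j => if (i = a ∧ j = b) ∨ (i = b ∧ j = a) then γ else 0)
      (fun i j => x i * x j) = γ * (x a * x b) := by
  have key : ∀ (p q : V), p < q → G.Adj p q →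
      ((p = a ∧ q = b) ∨ (p = b ∧ q = a)) ∨ ¬((p = a ∧ q = b) ∨ (p = b ∧ q = a)) :=
    fun _ _ _ _ => em _
  unfold edgeSum
  rcases lt_or_gt_of_ne hab with hlt | hgt
  · rw [Finset.sum_eq_single a, Finset.sum_eq_single b]
    · have hpair : ((a = a ∧ b = b) ∨ (a = b ∧ b = a)) := Or.inl ⟨rfl, rfl⟩
      simp [hlt, hadj, hpair]
    · intro j _ hj
      have hpair : ¬ ((a = a ∧ j = b) ∨ (a = b ∧ j = a)) := by
        rintro (⟨-, rfl⟩ | ⟨rfl, -⟩)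
        · exact hj rfl
        · exact hab rfl
      by_cases h : a < j ∧ G.Adj a j
      · simp only [if_pos h]
        simp [hj, hab]
      · rw [if_neg h]
    · intro hb; exact absurd (Finset.mem_univ b) hb
    · intro i _ hi
      refine Finset.sum_eq_zero fun j _ => ?_
      by_cases h : i < j ∧ G.Adj i j
      · have hpair : ¬ ((i = a ∧ j = b) ∨ (i = b ∧ j = a)) := by
          rintro (⟨rfl, rfl⟩ | ⟨rfl, rfl⟩)
          · exact hi rfl
          · exact absurd (h.1.trans hlt) (lt_irrefl _)
        simp only [if_pos h, if_neg hpair, zero_mul]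
      · rw [if_neg h]
    · intro ha; exact absurd (Finset.mem_univ a) ha
  · rw [Finset.sum_eq_single b, Finset.sum_eq_single a]
    · have hpair : ((b = a ∧ a = b) ∨ (b = b ∧ a = a)) := Or.inr ⟨rfl, rfl⟩
      have : x b * x a = x a * x b := mul_comm _ _
      simp [hgt, hadj.symm, hpair, this]
    · intro j _ hj
      have hpair : ¬ ((b = a ∧ j = b) ∨ (b = b ∧ j = a)) := by
        rintro (⟨hba, -⟩ | ⟨-, rfl⟩)
        · exact hab hba.symm
        · exact hj rfl
      by_cases h : b < j ∧ G.Adj b j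
      · simp only [if_pos h]
        simp [hj, hab.symm]
      · rw [if_neg h]
    · intro ha; exact absurd (Finset.mem_univ a) ha
    · intro i _ hi
      refine Finset.sum_eq_zero fun j _ => ?_
      by_cases h : i < j ∧ G.Adj i j
      · have hpair : ¬ ((i = a ∧ j = b) ∨ (i = b ∧ j = a)) := by
          rintro (⟨rfl, rfl⟩ | ⟨rfl, rfl⟩)
          · exact absurd (h.1.trans hgt) (lt_irrefl _)
          · exact hi rfl
        simp only [if_pos h, if_neg hpair, zero_mul]
      · rw [if_neg h]
    · intro hb; exact absurd (Finset.mem_univ b) hb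

end Aux2
section Aux3
set_option linter.unusedSectionVars false

variable {V : Type*} [Fintype V] [LinearOrder V]

/-- sign vector attached to a boolean vector -/
def sgn (σ : V → Bool) : V → ℝ := fun i => if σ i then 1 else -1

lemma sgn_pm (σ : V → Bool) : pmVec (sgn σ) := by
  intro i; unfold sgn; by_cases h : σ i <;> simp [h]

lemma pm_eq_sgn {x : V → ℝ} (hx : pmVec x) :
    x = sgn (fun i => if x i = 1 then true else false) := by
  funext i
  rcases hx i with h | h <;> simp [sgn, h] <;> norm_num

/-- flipping one coordinate of a boolean vector is an involutive equivalence,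
hence a sum of a function that is odd under this flip vanishes -/
lemma sum_flip_zero (v : V) (f : (V → Bool) → ℝ)
    (hf : ∀ σ, f (Function.update σ v (!σ v)) = - f σ) :
    ∑ σ : V → Bool, f σ = 0 := by
  have hinv : Function.Involutive (fun σ : V → Bool => Function.update σ v (!σ v)) := by
    intro σ
    funext u
    by_cases h : u = v
    · subst h; simp
    · simp [Function.update_of_ne h]
  let e := Function.Involutive.toPerm _ hinv
  have h1 : ∑ σ : V → Bool, f (e σ) = ∑ σ : V → Bool, f σ := Equiv.sum_comp e f
  have h2 : ∑ σ : V → Bool, f (e σ) = ∑ σ : V → Bool, - f σ := by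
    refine Finset.sum_congr rfl fun σ _ => ?_
    exact hf σ
  rw [h2, Finset.sum_neg_distrib] at h1
  linarith

lemma sgn_update_flip (σ : V → Bool) (v u : V) :
    sgn (Function.update σ v (!σ v)) u = if u = v then - sgn σ u else sgn σ u := by
  by_cases h : u = v
  · subst h; unfold sgn; by_cases hs : σ u <;> simp [hs]
  · simp [sgn, Function.update_of_ne h, h]

lemma sum_sgn_pair {i j : V} (hij : i ≠ j) :
    ∑ σ : V → Bool, sgn σ i * sgn σ j = 0 := by
  refine sum_flip_zero i _ fun σ => ?_
  rw [sgn_update_flip, sgn_update_flip]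
  simp [hij.symm]

/-- the average of `F` over all sign vectors is zero -/
lemma sum_F_zero (G : SimpleGraph V) (w : V → V → ℝ) :
    ∑ σ : V → Bool, edgeSum G w (fun i j => sgn σ i * sgn σ j) = 0 := by
  unfold edgeSum
  rw [Finset.sum_comm]
  refine Finset.sum_eq_zero fun i _ => ?_
  rw [Finset.sum_comm]
  refine Finset.sum_eq_zero fun j _ => ?_
  by_cases h : i < j ∧ G.Adj i j
  · simp only [h, and_self, if_true]
    rw [← Finset.mul_sum, sum_sgn_pair (ne_of_lt h.1), mul_zero]
  · simp [h]

lemma ipVal_nonneg (G : SimpleGraph V) (w : V → V → ℝ) : 0 ≤ ipVal G w := by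
  have h0 : (∑ σ : V → Bool, (0:ℝ)) ≤
      ∑ σ : V → Bool, edgeSum G w (fun i j => sgn σ i * sgn σ j) := by
    rw [sum_F_zero, Finset.sum_const, smul_zero]
  obtain ⟨σ, -, hσ⟩ := Finset.exists_le_of_sum_le ⟨fun _ => true, Finset.mem_univ _⟩ h0
  exact le_trans hσ (le_ipVal G w (sgn_pm σ))

/-- every value of `F` at a ±1 vector is at least `-(2^n) ip` -/
lemma neg_F_le (G : SimpleGraph V) (w : V → V → ℝ) {x : V → ℝ} (hx : pmVec x) :
    - edgeSum G w (fun i j => x i * x j) ≤ (2 ^ Fintype.card V : ℝ) * ipVal G w := by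
  set σ₀ : V → Bool := fun i => if x i = 1 then true else false with hσ₀
  have hxσ : x = sgn σ₀ := pm_eq_sgn hx
  have hsum := sum_F_zero G w
  rw [← Finset.add_sum_erase _ _ (Finset.mem_univ σ₀)] at hsum
  have h1 : - edgeSum G w (fun i j => sgn σ₀ i * sgn σ₀ j) =
      ∑ σ ∈ Finset.univ.erase σ₀, edgeSum G w (fun i j => sgn σ i * sgn σ j) := by
    linarith
  have h2 : ∑ σ ∈ Finset.univ.erase σ₀, edgeSum G w (fun i j => sgn σ i * sgn σ j) ≤
      ∑ σ ∈ Finset.univ.erase σ₀, ipVal G w :=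
    Finset.sum_le_sum fun σ _ => le_ipVal G w (sgn_pm σ)
  have h3 : ∑ σ ∈ Finset.univ.erase σ₀, ipVal G w ≤ (2 ^ Fintype.card V : ℝ) * ipVal G w := by
    rw [Finset.sum_const, nsmul_eq_mul]
    refine mul_le_mul_of_nonneg_right ?_ (ipVal_nonneg G w)
    have : (Finset.univ.erase σ₀).card ≤ Fintype.card (V → Bool) := by
      exact le_trans (Finset.card_erase_le) (Finset.card_le_univ _)
    calc ((Finset.univ.erase σ₀).card : ℝ) ≤ (Fintype.card (V → Bool) : ℝ) := by
          exact_mod_cast this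
      _ = (2 ^ Fintype.card V : ℝ) := by
          rw [Fintype.card_fun]; push_cast; simp [Fintype.card_bool]
  rw [hxσ]
  exact le_trans (le_of_eq h1) (le_trans h2 h3)

lemma abs_F_le (G : SimpleGraph V) (w : V → V → ℝ) {x : V → ℝ} (hx : pmVec x) :
    |edgeSum G w (fun i j => x i * x j)| ≤ (2 ^ Fintype.card V : ℝ) * ipVal G w := by
  rw [abs_le]
  constructor
  · have := neg_F_le G w hx; linarith
  · refine le_trans (le_ipVal G w hx) ?_
    have h1 : (1:ℝ) ≤ 2 ^ Fintype.card V := one_le_pow₀ one_le_two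
    nlinarith [ipVal_nonneg G w]

end Aux3
section Aux4
set_option linter.unusedSectionVars false

variable {V : Type*} [Fintype V] [LinearOrder V]

/-- flip the sign of one coordinate -/
def flipAt (x : V → ℝ) (v : V) : V → ℝ := fun u => if u = v then -x u else x u

lemma flipAt_pm {x : V → ℝ} (hx : pmVec x) (v : V) : pmVec (flipAt x v) := by
  intro i; unfold flipAt; by_cases h : i = v
  · subst h; rcases hx i with h' | h' <;> rw [if_pos rfl, h'] <;> norm_num
  · rw [if_neg h]; exact hx i

lemma bracket_eq {i j : V} (hij : i ≠ j) {k l : V} (hkl : k ≠ l) (x : V → ℝ) :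
    x k * x l - flipAt x i k * flipAt x i l - flipAt x j k * flipAt x j l
      + flipAt (flipAt x i) j k * flipAt (flipAt x i) j l =
    if (k = i ∨ k = j) ∧ (l = i ∨ l = j) then 4 * (x k * x l) else 0 := by
  unfold flipAt
  by_cases h1 : k = i <;> by_cases h2 : k = j <;> by_cases h3 : l = i <;> by_cases h4 : l = j <;>
    subst_vars <;> simp_all <;> ring

/-- four-point flip identity isolating a single weight -/
lemma four_term (G : SimpleGraph V) (w : V → V → ℝ) {i j : V} (hij : i < j)
    (hadj : G.Adj i j) (x : V → ℝ) :
    edgeSum G w (fun k l => x k * x l)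
      - edgeSum G w (fun k l => flipAt x i k * flipAt x i l)
      - edgeSum G w (fun k l => flipAt x j k * flipAt x j l)
      + edgeSum G w (fun k l => flipAt (flipAt x i) j k * flipAt (flipAt x i) j l)
      = 4 * w i j * (x i * x j) := by
  unfold edgeSum
  rw [← Finset.sum_sub_distrib, ← Finset.sum_sub_distrib, ← Finset.sum_add_distrib]
  have step : ∀ k l : V,
      ((if k < l ∧ G.Adj k l then w k l * (x k * x l) else 0)
        - (if k < l ∧ G.Adj k l then w k l * (flipAt x i k * flipAt x i l) else 0)
        - (if k < l ∧ G.Adj k l then w k l * (flipAt x j k * flipAt x j l) else 0)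
        + (if k < l ∧ G.Adj k l then w k l * (flipAt (flipAt x i) j k * flipAt (flipAt x i) j l) else 0))
      = if (k, l) = (i, j) then 4 * w i j * (x i * x j) else 0 := by
    intro k l
    by_cases hc : k < l ∧ G.Adj k l
    · simp only [hc, and_self, if_true]
      have hbr := bracket_eq (ne_of_lt hij) (ne_of_lt hc.1) x
      have : w k l * (x k * x l) - w k l * (flipAt x i k * flipAt x i l)
          - w k l * (flipAt x j k * flipAt x j l)
          + w k l * (flipAt (flipAt x i) j k * flipAt (flipAt x i) j l)
          = w k l * (if (k = i ∨ k = j) ∧ (l = i ∨ l = j) then 4 * (x k * x l) else 0) := by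
        rw [← hbr]; ring
      rw [this]
      by_cases hm : (k, l) = (i, j)
      · rw [Prod.ext_iff] at hm
        obtain ⟨hk, hl⟩ := hm
        subst hk; subst hl
        rw [if_pos (⟨Or.inl rfl, Or.inr rfl⟩ : (k = k ∨ k = l) ∧ (l = k ∨ l = l)),
          if_pos rfl]
        ring
      · rw [if_neg hm]
        have hcond : ¬ ((k = i ∨ k = j) ∧ (l = i ∨ l = j)) := by
          rintro ⟨hk | hk, hl | hl⟩
          · have h' := hc.1; rw [hk, hl] at h'; exact lt_irrefl _ h'
          · exact hm (by rw [hk, hl])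
          · have h' := hc.1; rw [hk, hl] at h'; exact absurd (hij.trans h') (lt_irrefl i)
          · have h' := hc.1; rw [hk, hl] at h'; exact lt_irrefl _ h'
        rw [if_neg hcond, mul_zero]
    · simp only [hc, if_false]
      have : ¬ ((k, l) = (i, j)) := by
        rintro h
        rw [Prod.ext_iff] at h
        obtain ⟨hk, hl⟩ := h
        subst hk; subst hl
        exact hc ⟨hij, hadj⟩
      rw [if_neg this]
      ring
  have key : (∑ k : V, ∑ l : V, if (k, l) = (i, j) then 4 * w i j * (x i * x j) else 0)
      = 4 * w i j * (x i * x j) := by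
    rw [Finset.sum_eq_single i, Finset.sum_eq_single j]
    · simp
    · intro l _ hl; simp [Prod.ext_iff, hl]
    · intro h; exact absurd (Finset.mem_univ j) h
    · intro k _ hk
      refine Finset.sum_eq_zero fun l _ => ?_
      simp [Prod.ext_iff, hk]
    · intro h; exact absurd (Finset.mem_univ i) h
  rw [← key]
  refine Finset.sum_congr rfl fun k _ => ?_
  rw [← Finset.sum_sub_distrib, ← Finset.sum_sub_distrib, ← Finset.sum_add_distrib]
  exact Finset.sum_congr rfl fun l _ => step k l

/-- weights on edges are controlled by the ip value -/
lemma w_bound (G : SimpleGraph V) (w : V → V → ℝ) {i j : V} (hij : i < j)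
    (hadj : G.Adj i j) :
    |w i j| ≤ (2 ^ Fintype.card V : ℝ) * ipVal G w := by
  have h4 := four_term G w hij hadj (fun _ => (1:ℝ))
  have h1 := abs_F_le G w (pmVec.one (V := V))
  have hpm1 : pmVec (flipAt (fun _ => (1:ℝ)) i) := flipAt_pm pmVec.one i
  have hpm2 : pmVec (flipAt (fun _ => (1:ℝ)) j) := flipAt_pm pmVec.one j
  have hpm3 : pmVec (flipAt (flipAt (fun _ => (1:ℝ)) i) j) := flipAt_pm hpm1 j
  have h2 := abs_F_le G w hpm1
  have h3 := abs_F_le G w hpm2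
  have h5 := abs_F_le G w hpm3
  rw [abs_le] at h1 h2 h3 h5
  rw [abs_le]
  constructor <;> linarith [h1.1, h1.2, h2.1, h2.2, h3.1, h3.2, h5.1, h5.2]

/-- Lemma A: the sdp value is universally bounded by a constant times the ip value -/
lemma sdp_le_C_ip (G : SimpleGraph V) (w : V → V → ℝ) :
    sdpVal G w ≤ ((Fintype.card V)^2 * 2 ^ Fintype.card V : ℝ) * ipVal G w := by
  refine sdpVal_le G w fun u hu => ?_
  have hterm : ∀ k l : V, (if k < l ∧ G.Adj k l then w k l * (inner ℝ (u k) (u l) : ℝ) else 0)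
      ≤ (2 ^ Fintype.card V : ℝ) * ipVal G w := by
    intro k l
    by_cases hc : k < l ∧ G.Adj k l
    · simp only [hc, and_self, if_true]
      calc w k l * (inner ℝ (u k) (u l) : ℝ) ≤ |w k l * (inner ℝ (u k) (u l) : ℝ)| := le_abs_self _
        _ = |w k l| * |(inner ℝ (u k) (u l) : ℝ)| := abs_mul _ _
        _ ≤ |w k l| * 1 := by
            refine mul_le_mul_of_nonneg_left ?_ (abs_nonneg _)
            calc |(inner ℝ (u k) (u l) : ℝ)| ≤ ‖u k‖ * ‖u l‖ := abs_real_inner_le_norm _ _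
              _ = 1 := by rw [hu k, hu l, one_mul]
        _ = |w k l| := mul_one _
        _ ≤ (2 ^ Fintype.card V : ℝ) * ipVal G w := w_bound G w hc.1 hc.2
    · simp only [hc, if_false]
      exact mul_nonneg (by positivity) (ipVal_nonneg G w)
  calc edgeSum G w (fun k l => (inner ℝ (u k) (u l) : ℝ))
      ≤ ∑ k : V, ∑ l : V, (2 ^ Fintype.card V : ℝ) * ipVal G w :=
        Finset.sum_le_sum fun k _ => Finset.sum_le_sum fun l _ => hterm k l
    _ = ((Fintype.card V)^2 * 2 ^ Fintype.card V : ℝ) * ipVal G w := by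
        rw [Finset.sum_const, Finset.sum_const, Finset.card_univ, smul_smul, nsmul_eq_mul]
        push_cast
        ring

lemma ratioSet_bddAbove (G : SimpleGraph V) :
    BddAbove {t | ∃ w : V → V → ℝ, t = sdpVal G w / ipVal G w} := by
  refine ⟨((Fintype.card V)^2 * 2 ^ Fintype.card V : ℝ), ?_⟩
  rintro t ⟨w, rfl⟩
  rcases eq_or_lt_of_le (ipVal_nonneg G w) with h0 | hpos
  · rw [← h0, div_zero]
    have h2 : (0:ℝ) ≤ ((Fintype.card V)^2 * 2 ^ Fintype.card V : ℝ) := by positivity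
    exact h2
  · rw [div_le_iff₀ hpos]
    exact sdp_le_C_ip G w

lemma ratioSet_nonempty (G : SimpleGraph V) :
    Set.Nonempty {t | ∃ w : V → V → ℝ, t = sdpVal G w / ipVal G w} :=
  ⟨_, ⟨fun _ _ => 0, rfl⟩⟩

lemma kappaVal_nonneg (G : SimpleGraph V) : 0 ≤ kappaVal G := by
  have hz : sdpVal G (fun _ _ => (0:ℝ)) = 0 := by
    have h1 : ∀ u : V → EuclideanSpace ℝ V,
        edgeSum G (fun _ _ => (0:ℝ)) (fun i j => (inner ℝ (u i) (u j) : ℝ)) = 0 := by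
      intro u
      refine Finset.sum_eq_zero fun i _ => Finset.sum_eq_zero fun j _ => ?_
      by_cases h : i < j ∧ G.Adj i j <;> simp [h]
    refine le_antisymm (sdpVal_le G _ fun u hu => le_of_eq (h1 u)) ?_
    obtain ⟨t, ⟨u, hu, ht⟩⟩ := sdpSet_nonempty G (fun _ _ => (0:ℝ))
    rw [ht] at *
    calc (0:ℝ) = edgeSum G (fun _ _ => (0:ℝ)) (fun i j => (inner ℝ (u i) (u j) : ℝ)) :=
          (h1 u).symm
      _ ≤ sdpVal G _ := le_sdpVal G _ hu
  have : (0:ℝ) ∈ {t | ∃ w : V → V → ℝ, t = sdpVal G w / ipVal G w} :=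
    ⟨fun _ _ => 0, by rw [hz, zero_div]⟩
  exact le_csSup (ratioSet_bddAbove G) this

/-- key consequence: `sdp ≤ κ · ip` -/
lemma sdp_le_kappa_ip (G : SimpleGraph V) (w : V → V → ℝ) :
    sdpVal G w ≤ kappaVal G * ipVal G w := by
  rcases eq_or_lt_of_le (ipVal_nonneg G w) with h0 | hpos
  · rw [← h0, mul_zero]
    have := sdp_le_C_ip G w
    rw [← h0, mul_zero] at this
    exact this
  · have hmem : sdpVal G w / ipVal G w ∈
        {t | ∃ w' : V → V → ℝ, t = sdpVal G w' / ipVal G w'} := ⟨w, rfl⟩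
    have := le_csSup (ratioSet_bddAbove G) hmem
    calc sdpVal G w = (sdpVal G w / ipVal G w) * ipVal G w := by
          field_simp
      _ ≤ kappaVal G * ipVal G w := mul_le_mul_of_nonneg_right this (le_of_lt hpos)

end Aux4
section Aux5
set_option linter.unusedSectionVars false

variable {V : Type*} [Fintype V] [LinearOrder V]

lemma edgeSum_zero_w (G : SimpleGraph V) (y : V → V → ℝ) :
    edgeSum G (fun _ _ => (0:ℝ)) y = 0 := by
  refine Finset.sum_eq_zero fun i _ => Finset.sum_eq_zero fun j _ => ?_
  by_cases h : i < j ∧ G.Adj i j <;> simp [h]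

/-- maximum of the edge sum over ±1 vectors agreeing with `x` on `C` -/
noncomputable def condVal (H : SimpleGraph V) (ww : V → V → ℝ) (C : Finset V) (x : V → ℝ) : ℝ :=
  sSup {t | ∃ y : V → ℝ, pmVec y ∧ (∀ i ∈ C, y i = x i) ∧
    t = edgeSum H ww (fun i j => y i * y j)}

lemma condSet_nonempty (H : SimpleGraph V) (ww : V → V → ℝ) (C : Finset V) {x : V → ℝ}
    (hx : pmVec x) :
    Set.Nonempty {t | ∃ y : V → ℝ, pmVec y ∧ (∀ i ∈ C, y i = x i) ∧
      t = edgeSum H ww (fun i j => y i * y j)} := by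
  refine ⟨_, ⟨fun i => if i ∈ C then x i else 1, fun i => ?_, fun i hi => by simp [hi], rfl⟩⟩
  by_cases h : i ∈ C
  · simp only [h, if_true]; exact hx i
  · simp [h]

lemma condSet_bddAbove (H : SimpleGraph V) (ww : V → V → ℝ) (C : Finset V) (x : V → ℝ) :
    BddAbove {t | ∃ y : V → ℝ, pmVec y ∧ (∀ i ∈ C, y i = x i) ∧
      t = edgeSum H ww (fun i j => y i * y j)} := by
  refine ⟨∑ i, ∑ j, |ww i j|, ?_⟩
  rintro t ⟨y, hy, -, rfl⟩
  exact edgeSum_le_sum_abs H ww (fun i j _ _ => pmVec.abs_mul_le hy i j)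

lemma le_condVal (H : SimpleGraph V) (ww : V → V → ℝ) (C : Finset V) {x : V → ℝ}
    (hx : pmVec x) :
    edgeSum H ww (fun i j => x i * x j) ≤ condVal H ww C x :=
  le_csSup (condSet_bddAbove H ww C x) ⟨x, hx, fun _ _ => rfl, rfl⟩

lemma condVal_le (H : SimpleGraph V) (ww : V → V → ℝ) (C : Finset V) {x : V → ℝ}
    (hx : pmVec x) {B : ℝ}
    (h : ∀ y : V → ℝ, pmVec y → (∀ i ∈ C, y i = x i) →
      edgeSum H ww (fun i j => y i * y j) ≤ B) :
    condVal H ww C x ≤ B := by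
  refine csSup_le (condSet_nonempty H ww C hx) ?_
  rintro t ⟨y, hy, hagree, rfl⟩
  exact h y hy hagree

lemma condVal_congr (H : SimpleGraph V) (ww : V → V → ℝ) (C : Finset V) {x x' : V → ℝ}
    (h : ∀ i ∈ C, x i = x' i) :
    condVal H ww C x = condVal H ww C x' := by
  unfold condVal
  congr 1
  ext t
  constructor
  · rintro ⟨y, hy, hagree, rfl⟩
    exact ⟨y, hy, fun i hi => (hagree i hi).trans (h i hi), rfl⟩
  · rintro ⟨y, hy, hagree, rfl⟩
    exact ⟨y, hy, fun i hi => (hagree i hi).trans (h i hi).symm, rfl⟩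

lemma condVal_neg (H : SimpleGraph V) (ww : V → V → ℝ) (C : Finset V) (x : V → ℝ) :
    condVal H ww C (fun i => - x i) = condVal H ww C x := by
  unfold condVal
  congr 1
  ext t
  constructor
  · rintro ⟨y, hy, hagree, rfl⟩
    refine ⟨fun i => - y i, hy.neg, fun i hi => by show -y i = x i; rw [hagree i hi]; ring, ?_⟩
    rw [edgeSum_neg_x]
  · rintro ⟨y, hy, hagree, rfl⟩
    refine ⟨fun i => - y i, hy.neg, fun i hi => by show -y i = -x i; rw [hagree i hi], ?_⟩
    rw [edgeSum_neg_x]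

end Aux5
section Aux6
set_option linter.unusedSectionVars false

variable {V : Type*} [Fintype V] [LinearOrder V]

lemma edgeSum_three_pairs (G : SimpleGraph V) {a b c : V}
    (hab : a ≠ b) (hac : a ≠ c) (hbc : b ≠ c)
    (hAab : G.Adj a b) (hAac : G.Adj a c) (hAbc : G.Adj b c)
    (γ₁ γ₂ γ₃ : ℝ) (x : V → ℝ) :
    edgeSum G (fun i j =>
        (if (i = a ∧ j = b) ∨ (i = b ∧ j = a) then γ₁ else 0) +
        ((if (i = a ∧ j = c) ∨ (i = c ∧ j = a) then γ₂ else 0) +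
         (if (i = b ∧ j = c) ∨ (i = c ∧ j = b) then γ₃ else 0)))
      (fun i j => x i * x j)
      = γ₁ * (x a * x b) + (γ₂ * (x a * x c) + γ₃ * (x b * x c)) := by
  have h1 : edgeSum G (fun i j =>
        (if (i = a ∧ j = b) ∨ (i = b ∧ j = a) then γ₁ else 0) +
        ((if (i = a ∧ j = c) ∨ (i = c ∧ j = a) then γ₂ else 0) +
         (if (i = b ∧ j = c) ∨ (i = c ∧ j = b) then γ₃ else 0)))
      (fun i j => x i * x j)
      = edgeSum G (fun i j => if (i = a ∧ j = b) ∨ (i = b ∧ j = a) then γ₁ else 0)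
          (fun i j => x i * x j)
        + edgeSum G (fun i j =>
            (if (i = a ∧ j = c) ∨ (i = c ∧ j = a) then γ₂ else 0) +
            (if (i = b ∧ j = c) ∨ (i = c ∧ j = b) then γ₃ else 0))
          (fun i j => x i * x j) := edgeSum_add_w G _ _ _
  have h2 : edgeSum G (fun i j =>
            (if (i = a ∧ j = c) ∨ (i = c ∧ j = a) then γ₂ else 0) +
            (if (i = b ∧ j = c) ∨ (i = c ∧ j = b) then γ₃ else 0))
          (fun i j => x i * x j)
      = edgeSum G (fun i j => if (i = a ∧ j = c) ∨ (i = c ∧ j = a) then γ₂ else 0)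
          (fun i j => x i * x j)
        + edgeSum G (fun i j => if (i = b ∧ j = c) ∨ (i = c ∧ j = b) then γ₃ else 0)
          (fun i j => x i * x j) := edgeSum_add_w G _ _ _
  rw [h1, h2, edgeSum_pair G hab hAab, edgeSum_pair G hac hAac, edgeSum_pair G hbc hAbc]

lemma realize_correction (G : SimpleGraph V) (C : Finset V)
    (hC : G.IsClique ↑C) (hk : C.card ≤ 3)
    (D : (V → ℝ) → ℝ)
    (hcongr : ∀ x x' : V → ℝ, (∀ i ∈ C, x i = x' i) → D x = D x')
    (hneg : ∀ x : V → ℝ, D (fun i => - x i) = D x) :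
    ∃ c : V → V → ℝ, (∀ i j, c i j ≠ 0 → i ∈ C ∧ j ∈ C ∧ i ≠ j) ∧ ∃ g : ℝ,
      ∀ x : V → ℝ, pmVec x → edgeSum G c (fun i j => x i * x j) = D x - g := by
  have h03 : C.card = 0 ∨ C.card = 1 ∨ C.card = 2 ∨ C.card = 3 := by omega
  rcases h03 with h | h | h | h
  · -- empty clique
    rw [Finset.card_eq_zero] at h
    refine ⟨fun _ _ => 0, fun i j hij => absurd rfl hij, D (fun _ => 1), fun x hx => ?_⟩
    rw [edgeSum_zero_w]
    have hDx : D x = D (fun _ => 1) := hcongr x _ (by simp [h])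
    linarith
  · -- a single vertex
    obtain ⟨a, ha⟩ := Finset.card_eq_one.mp h
    refine ⟨fun _ _ => 0, fun i j hij => absurd rfl hij, D (fun _ => 1), fun x hx => ?_⟩
    rw [edgeSum_zero_w]
    have hDx : D x = D (fun _ => 1) := by
      rcases hx a with h1 | h1
      · refine hcongr x _ fun i hi => ?_
        rw [ha, Finset.mem_singleton] at hi
        subst hi; exact h1
      · have h2 : D x = D (fun i => - (fun _ : V => (1:ℝ)) i) := by
          refine hcongr x _ fun i hi => ?_
          rw [ha, Finset.mem_singleton] at hi
          subst hi
          show x i = -1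
          exact h1
        rw [h2, hneg]
    linarith
  · -- an edge
    obtain ⟨a, b, hab, hC2⟩ := Finset.card_eq_two.mp h
    have haC : a ∈ (↑C : Set V) := by rw [hC2]; simp
    have hbC : b ∈ (↑C : Set V) := by rw [hC2]; simp
    have hAab : G.Adj a b := hC haC hbC hab
    have hmem : ∀ i ∈ C, i = a ∨ i = b := by
      intro i hi; rw [hC2] at hi; simpa using hi
    set g1 := D (fun _ : V => (1:ℝ)) with hg1
    set g2 := D (fun i : V => if i = b then (-1:ℝ) else 1) with hg2
    refine ⟨fun i j => if (i = a ∧ j = b) ∨ (i = b ∧ j = a) then (g1 - g2)/2 else 0,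
      ?_, (g1 + g2)/2, ?_⟩
    · intro i j hne
      by_cases hp : (i = a ∧ j = b) ∨ (i = b ∧ j = a)
      · rcases hp with ⟨rfl, rfl⟩ | ⟨rfl, rfl⟩
        · exact ⟨by rw [hC2]; simp, by rw [hC2]; simp, hab⟩
        · exact ⟨by rw [hC2]; simp, by rw [hC2]; simp, hab.symm⟩
      · exact absurd (if_neg hp) hne
    · intro x hx
      rw [edgeSum_pair G hab hAab]
      rcases hx a with ha1 | ha1 <;> rcases hx b with hb1 | hb1
      · have hDx : D x = g1 := by
          refine hcongr x _ fun i hi => ?_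
          rcases hmem i hi with rfl | rfl <;>
            simp [ha1, hb1, hab, Ne.symm hab]
        rw [hDx, ha1, hb1]; ring
      · have hDx : D x = g2 := by
          refine hcongr x _ fun i hi => ?_
          rcases hmem i hi with rfl | rfl <;>
            simp [ha1, hb1, hab, Ne.symm hab]
        rw [hDx, ha1, hb1]; ring
      · have hDx : D x = g2 := by
          have h2 : D x = D (fun i => - (fun i : V => if i = b then (-1:ℝ) else 1) i) := by
            refine hcongr x _ fun i hi => ?_
            rcases hmem i hi with rfl | rfl <;>
            simp [ha1, hb1, hab, Ne.symm hab]
          rw [h2, hneg]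
        rw [hDx, ha1, hb1]; ring
      · have hDx : D x = g1 := by
          have h2 : D x = D (fun i => - (fun _ : V => (1:ℝ)) i) := by
            refine hcongr x _ fun i hi => ?_
            rcases hmem i hi with rfl | rfl <;>
            simp [ha1, hb1, hab, Ne.symm hab]
          rw [h2, hneg]
        rw [hDx, ha1, hb1]; ring
  · -- a triangle
    obtain ⟨a, b, c, hab, hac, hbc, hC3⟩ := Finset.card_eq_three.mp h
    have haC : a ∈ (↑C : Set V) := by rw [hC3]; simp
    have hbC : b ∈ (↑C : Set V) := by rw [hC3]; simp
    have hcC : c ∈ (↑C : Set V) := by rw [hC3]; simp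
    have hAab : G.Adj a b := hC haC hbC hab
    have hAac : G.Adj a c := hC haC hcC hac
    have hAbc : G.Adj b c := hC hbC hcC hbc
    have hmem : ∀ i ∈ C, i = a ∨ i = b ∨ i = c := by
      intro i hi; rw [hC3] at hi; simpa using hi
    set e1 : V → ℝ := fun _ => 1 with he1
    set e2 : V → ℝ := fun i => if i = c then (-1:ℝ) else 1 with he2
    set e3 : V → ℝ := fun i => if i = b then (-1:ℝ) else 1 with he3
    set e4 : V → ℝ := fun i => if i = b ∨ i = c then (-1:ℝ) else 1 with he4
    set g1 := D e1 with hg1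
    set g2 := D e2 with hg2
    set g3 := D e3 with hg3
    set g4 := D e4 with hg4
    refine ⟨fun i j =>
        (if (i = a ∧ j = b) ∨ (i = b ∧ j = a) then (g1 + g2 - g3 - g4)/4 else 0) +
        ((if (i = a ∧ j = c) ∨ (i = c ∧ j = a) then (g1 - g2 + g3 - g4)/4 else 0) +
         (if (i = b ∧ j = c) ∨ (i = c ∧ j = b) then (g1 - g2 - g3 + g4)/4 else 0)),
      ?_, (g1 + g2 + g3 + g4)/4, ?_⟩
    · intro i j hne
      by_cases h1 : (i = a ∧ j = b) ∨ (i = b ∧ j = a)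
      · rcases h1 with ⟨rfl, rfl⟩ | ⟨rfl, rfl⟩
        · exact ⟨by rw [hC3]; simp, by rw [hC3]; simp, hab⟩
        · exact ⟨by rw [hC3]; simp, by rw [hC3]; simp, hab.symm⟩
      · by_cases h2 : (i = a ∧ j = c) ∨ (i = c ∧ j = a)
        · rcases h2 with ⟨rfl, rfl⟩ | ⟨rfl, rfl⟩
          · exact ⟨by rw [hC3]; simp, by rw [hC3]; simp, hac⟩
          · exact ⟨by rw [hC3]; simp, by rw [hC3]; simp, hac.symm⟩
        · by_cases h3 : (i = b ∧ j = c) ∨ (i = c ∧ j = b)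
          · rcases h3 with ⟨rfl, rfl⟩ | ⟨rfl, rfl⟩
            · exact ⟨by rw [hC3]; simp, by rw [hC3]; simp, hbc⟩
            · exact ⟨by rw [hC3]; simp, by rw [hC3]; simp, hbc.symm⟩
          · exfalso; apply hne
            show (if (i = a ∧ j = b) ∨ (i = b ∧ j = a) then (g1 + g2 - g3 - g4)/4 else 0) +
              ((if (i = a ∧ j = c) ∨ (i = c ∧ j = a) then (g1 - g2 + g3 - g4)/4 else 0) +
               (if (i = b ∧ j = c) ∨ (i = c ∧ j = b) then (g1 - g2 - g3 + g4)/4 else 0)) = 0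
            rw [if_neg h1, if_neg h2, if_neg h3]; ring
    · intro x hx
      rw [edgeSum_three_pairs G hab hac hbc hAab hAac hAbc]
      have hxa := hx a
      have hxb := hx b
      have hxc := hx c
      rcases hxa with ha1 | ha1 <;> rcases hxb with hb1 | hb1 <;> rcases hxc with hc1 | hc1
      · -- (+,+,+) : e1
        have hDx : D x = g1 := by
          refine hcongr x _ fun i hi => ?_
          rcases hmem i hi with rfl | rfl | rfl <;>
            simp [ha1, hb1, hc1, hab, hac, hbc, Ne.symm hab, Ne.symm hac, Ne.symm hbc, he1, he2, he3, he4]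
        rw [hDx, ha1, hb1, hc1]; ring
      · -- (+,+,-) : e2
        have hDx : D x = g2 := by
          refine hcongr x _ fun i hi => ?_
          rcases hmem i hi with rfl | rfl | rfl <;>
            simp [ha1, hb1, hc1, hab, hac, hbc, Ne.symm hab, Ne.symm hac, Ne.symm hbc, he1, he2, he3, he4]
        rw [hDx, ha1, hb1, hc1]; ring
      · -- (+,-,+) : e3
        have hDx : D x = g3 := by
          refine hcongr x _ fun i hi => ?_
          rcases hmem i hi with rfl | rfl | rfl <;>
            simp [ha1, hb1, hc1, hab, hac, hbc, Ne.symm hab, Ne.symm hac, Ne.symm hbc, he1, he2, he3, he4]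
        rw [hDx, ha1, hb1, hc1]; ring
      · -- (+,-,-) : e4
        have hDx : D x = g4 := by
          refine hcongr x _ fun i hi => ?_
          rcases hmem i hi with rfl | rfl | rfl <;>
            simp [ha1, hb1, hc1, hab, hac, hbc, Ne.symm hab, Ne.symm hac, Ne.symm hbc, he1, he2, he3, he4]
        rw [hDx, ha1, hb1, hc1]; ring
      · -- (-,+,+) : -e4
        have hDx : D x = g4 := by
          have h2 : D x = D (fun i => - e4 i) := by
            refine hcongr x _ fun i hi => ?_
            rcases hmem i hi with rfl | rfl | rfl <;>
            simp [ha1, hb1, hc1, hab, hac, hbc, Ne.symm hab, Ne.symm hac, Ne.symm hbc, he1, he2, he3, he4]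
          rw [h2, hneg]
        rw [hDx, ha1, hb1, hc1]; ring
      · -- (-,+,-) : -e3
        have hDx : D x = g3 := by
          have h2 : D x = D (fun i => - e3 i) := by
            refine hcongr x _ fun i hi => ?_
            rcases hmem i hi with rfl | rfl | rfl <;>
            simp [ha1, hb1, hc1, hab, hac, hbc, Ne.symm hab, Ne.symm hac, Ne.symm hbc, he1, he2, he3, he4]
          rw [h2, hneg]
        rw [hDx, ha1, hb1, hc1]; ring
      · -- (-,-,+) : -e2
        have hDx : D x = g2 := by
          have h2 : D x = D (fun i => - e2 i) := by
            refine hcongr x _ fun i hi => ?_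
            rcases hmem i hi with rfl | rfl | rfl <;>
            simp [ha1, hb1, hc1, hab, hac, hbc, Ne.symm hab, Ne.symm hac, Ne.symm hbc, he1, he2, he3, he4]
          rw [h2, hneg]
        rw [hDx, ha1, hb1, hc1]; ring
      · -- (-,-,-) : -e1
        have hDx : D x = g1 := by
          have h2 : D x = D (fun i => - e1 i) := by
            refine hcongr x _ fun i hi => ?_
            rcases hmem i hi with rfl | rfl | rfl <;>
            simp [ha1, hb1, hc1, hab, hac, hbc, Ne.symm hab, Ne.symm hac, Ne.symm hbc, he1, he2, he3, he4]
          rw [h2, hneg]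
        rw [hDx, ha1, hb1, hc1]; ring

end Aux6
section Aux7
set_option linter.unusedSectionVars false

variable {V : Type*} [Fintype V] [LinearOrder V]

lemma sdpVal_congr {G G' : SimpleGraph V} {w w' : V → V → ℝ}
    (h : ∀ y : V → V → ℝ, edgeSum G w y = edgeSum G' w' y) :
    sdpVal G w = sdpVal G' w' := by
  unfold sdpVal
  congr 1
  ext t
  constructor
  · rintro ⟨u, hu, rfl⟩; exact ⟨u, hu, h _⟩
  · rintro ⟨u, hu, rfl⟩; exact ⟨u, hu, (h _).symm⟩

lemma ipVal_congr {G G' : SimpleGraph V} {w w' : V → V → ℝ}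
    (h : ∀ y : V → V → ℝ, edgeSum G w y = edgeSum G' w' y) :
    ipVal G w = ipVal G' w' := by
  unfold ipVal
  congr 1
  ext t
  constructor
  · rintro ⟨x, hx, rfl⟩; exact ⟨x, hx, h _⟩
  · rintro ⟨x, hx, rfl⟩; exact ⟨x, hx, (h _).symm⟩

lemma kappa_le_sup_left (G₁ G₂ : SimpleGraph V) : kappaVal G₁ ≤ kappaVal (G₁ ⊔ G₂) := by
  refine csSup_le_csSup (ratioSet_bddAbove _) (ratioSet_nonempty _) ?_
  rintro t ⟨w, rfl⟩
  refine ⟨fun i j => if G₁.Adj i j then w i j else 0, ?_⟩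
  have h : ∀ y : V → V → ℝ, edgeSum G₁ w y =
      edgeSum (G₁ ⊔ G₂) (fun i j => if G₁.Adj i j then w i j else 0) y := by
    intro y
    rw [edgeSum_congr_w G₁ y (fun i j _ hadj => (if_pos hadj).symm)]
    refine edgeSum_congr_graph _ y fun i j _ hne => ?_
    have hadj : G₁.Adj i j := by
      by_contra hc
      exact hne (if_neg hc)
    exact iff_of_true hadj ((SimpleGraph.sup_adj _ _ _ _).mpr (Or.inl hadj))
  rw [sdpVal_congr h, ipVal_congr h]

lemma kappa_le_sup_right (G₁ G₂ : SimpleGraph V) : kappaVal G₂ ≤ kappaVal (G₁ ⊔ G₂) := by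
  refine csSup_le_csSup (ratioSet_bddAbove _) (ratioSet_nonempty _) ?_
  rintro t ⟨w, rfl⟩
  refine ⟨fun i j => if G₂.Adj i j then w i j else 0, ?_⟩
  have h : ∀ y : V → V → ℝ, edgeSum G₂ w y =
      edgeSum (G₁ ⊔ G₂) (fun i j => if G₂.Adj i j then w i j else 0) y := by
    intro y
    rw [edgeSum_congr_w G₂ y (fun i j _ hadj => (if_pos hadj).symm)]
    refine edgeSum_congr_graph _ y fun i j _ hne => ?_
    have hadj : G₂.Adj i j := by
      by_contra hc
      exact hne (if_neg hc)
    exact iff_of_true hadj ((SimpleGraph.sup_adj _ _ _ _).mpr (Or.inr hadj))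
  rw [sdpVal_congr h, ipVal_congr h]

lemma hard_dir (G₁ G₂ : SimpleGraph V) (V₁ V₂ C : Finset V)
    (hE₁ : ∀ i j, G₁.Adj i j → i ∈ V₁ ∧ j ∈ V₁)
    (hE₂ : ∀ i j, G₂.Adj i j → i ∈ V₂ ∧ j ∈ V₂)
    (hCmem : ∀ i, i ∈ V₁ → i ∈ V₂ → i ∈ C)
    (hclique₁ : G₁.IsClique ↑C) (hclique₂ : G₂.IsClique ↑C)
    (hk : C.card ≤ 3) (w : V → V → ℝ) :
    sdpVal (G₁ ⊔ G₂) w ≤ max (kappaVal G₁) (kappaVal G₂) * ipVal (G₁ ⊔ G₂) w := by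
  set w1 : V → V → ℝ := fun i j => if G₁.Adj i j then w i j else 0 with hw1
  set w2 : V → V → ℝ := fun i j => if G₂.Adj i j ∧ ¬ G₁.Adj i j then w i j else 0 with hw2
  set Df : (V → ℝ) → ℝ := fun x => (condVal G₂ w2 C x - condVal G₁ w1 C x) / 2 with hDf
  obtain ⟨cc, hsupp, g, hrep⟩ := realize_correction G₁ C hclique₁ hk Df
    (fun x x' hag => by
      simp only [hDf]
      rw [condVal_congr G₂ w2 C hag, condVal_congr G₁ w1 C hag])
    (fun x => by
      simp only [hDf]
      rw [condVal_neg, condVal_neg])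
  -- the correction is supported inside the clique, hence seen identically by both graphs
  have hcc : ∀ y : V → V → ℝ, edgeSum G₁ cc y = edgeSum G₂ cc y := by
    intro y
    refine edgeSum_congr_graph cc y fun i j _ hne => ?_
    obtain ⟨hiC, hjC, hij⟩ := hsupp i j hne
    exact iff_of_true (hclique₁ (Finset.mem_coe.mpr hiC) (Finset.mem_coe.mpr hjC) hij)
      (hclique₂ (Finset.mem_coe.mpr hiC) (Finset.mem_coe.mpr hjC) hij)
  -- splitting the weight
  have hsplit : ∀ y : V → V → ℝ, edgeSum (G₁ ⊔ G₂) w y =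
      edgeSum G₁ (fun i j => w1 i j + cc i j) y + edgeSum G₂ (fun i j => w2 i j - cc i j) y := by
    intro y
    rw [edgeSum_add_w, edgeSum_sub_w, hcc y, edgeSum_sup_split G₁ G₂ w y, ← hw1, ← hw2]
    ring
  -- sdp splits
  have hsdp : sdpVal (G₁ ⊔ G₂) w ≤ sdpVal G₁ (fun i j => w1 i j + cc i j) +
      sdpVal G₂ (fun i j => w2 i j - cc i j) := by
    refine sdpVal_le _ w fun u hu => ?_
    rw [hsplit _]
    exact add_le_add (le_sdpVal _ _ hu) (le_sdpVal _ _ hu)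
  -- gluing bound for the conditional maxima
  have hAB : ∀ x : V → ℝ, pmVec x →
      condVal G₁ w1 C x + condVal G₂ w2 C x ≤ ipVal (G₁ ⊔ G₂) w := by
    intro x hx
    have h1 : condVal G₁ w1 C x ≤ ipVal (G₁ ⊔ G₂) w - condVal G₂ w2 C x := by
      refine condVal_le G₁ w1 C hx fun y1 hy1 hag1 => ?_
      have h2 : condVal G₂ w2 C x ≤ ipVal (G₁ ⊔ G₂) w -
          edgeSum G₁ w1 (fun i j => y1 i * y1 j) := by
        refine condVal_le G₂ w2 C hx fun y2 hy2 hag2 => ?_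
        have hzpm : pmVec (fun i => if i ∈ V₁ then y1 i else y2 i) := by
          intro i
          by_cases hi : i ∈ V₁
          · simp only [hi, if_true]; exact hy1 i
          · simp only [hi, if_false]; exact hy2 i
        have hz1 : edgeSum G₁ w1
            (fun i j => (fun i => if i ∈ V₁ then y1 i else y2 i) i *
              (fun i => if i ∈ V₁ then y1 i else y2 i) j) =
            edgeSum G₁ w1 (fun i j => y1 i * y1 j) :=
          edgeSum_vertex_congr hE₁ w1 (fun i hi => by simp [hi])
        have hz2 : edgeSum G₂ w2
            (fun i j => (fun i => if i ∈ V₁ then y1 i else y2 i) i *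
              (fun i => if i ∈ V₁ then y1 i else y2 i) j) =
            edgeSum G₂ w2 (fun i j => y2 i * y2 j) := by
          refine edgeSum_vertex_congr hE₂ w2 (fun i hi => ?_)
          by_cases hiV1 : i ∈ V₁
          · have hiC : i ∈ C := hCmem i hiV1 hi
            simp only [hiV1, if_true]
            rw [hag1 i hiC, ← hag2 i hiC]
          · simp [hiV1]
        have hzsum : edgeSum (G₁ ⊔ G₂) w
            (fun i j => (fun i => if i ∈ V₁ then y1 i else y2 i) i *
              (fun i => if i ∈ V₁ then y1 i else y2 i) j) =
            edgeSum G₁ w1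
              (fun i j => (fun i => if i ∈ V₁ then y1 i else y2 i) i *
                (fun i => if i ∈ V₁ then y1 i else y2 i) j) +
            edgeSum G₂ w2
              (fun i j => (fun i => if i ∈ V₁ then y1 i else y2 i) i *
                (fun i => if i ∈ V₁ then y1 i else y2 i) j) := by
          rw [edgeSum_sup_split G₁ G₂ w _, ← hw1, ← hw2]
        have hle := le_ipVal (G₁ ⊔ G₂) w hzpm
        rw [hzsum, hz1, hz2] at hle
        linarith
      linarith
    linarith
  -- ip values of the corrected weights glue
  have hip : ipVal G₁ (fun i j => w1 i j + cc i j) + ipVal G₂ (fun i j => w2 i j - cc i j) ≤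
      ipVal (G₁ ⊔ G₂) w := by
    have h1 : ipVal G₁ (fun i j => w1 i j + cc i j) ≤
        ipVal (G₁ ⊔ G₂) w - ipVal G₂ (fun i j => w2 i j - cc i j) := by
      refine ipVal_le _ _ fun x1 hx1 => ?_
      have h2 : ipVal G₂ (fun i j => w2 i j - cc i j) ≤
          ipVal (G₁ ⊔ G₂) w - edgeSum G₁ (fun i j => w1 i j + cc i j) (fun i j => x1 i * x1 j) := by
        refine ipVal_le _ _ fun x2 hx2 => ?_
        have e1 : edgeSum G₁ (fun i j => w1 i j + cc i j) (fun i j => x1 i * x1 j) =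
            edgeSum G₁ w1 (fun i j => x1 i * x1 j) + (Df x1 - g) := by
          rw [edgeSum_add_w, hrep x1 hx1]
        have e2 : edgeSum G₂ (fun i j => w2 i j - cc i j) (fun i j => x2 i * x2 j) =
            edgeSum G₂ w2 (fun i j => x2 i * x2 j) - (Df x2 - g) := by
          rw [edgeSum_sub_w, ← hcc _, hrep x2 hx2]
        have b1 : edgeSum G₁ w1 (fun i j => x1 i * x1 j) ≤ condVal G₁ w1 C x1 :=
          le_condVal _ _ _ hx1
        have b2 : edgeSum G₂ w2 (fun i j => x2 i * x2 j) ≤ condVal G₂ w2 C x2 :=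
          le_condVal _ _ _ hx2
        have g1 := hAB x1 hx1
        have g2 := hAB x2 hx2
        have hDf1 : Df x1 = (condVal G₂ w2 C x1 - condVal G₁ w1 C x1) / 2 := by rw [hDf]
        have hDf2 : Df x2 = (condVal G₂ w2 C x2 - condVal G₁ w1 C x2) / 2 := by rw [hDf]
        rw [e2]
        rw [e1] at *
        linarith [b1, b2, g1, g2]
      linarith
    linarith
  -- final chain
  have k1 := sdp_le_kappa_ip G₁ (fun i j => w1 i j + cc i j)
  have k2 := sdp_le_kappa_ip G₂ (fun i j => w2 i j - cc i j)
  have hK0 : 0 ≤ max (kappaVal G₁) (kappaVal G₂) :=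
    le_trans (kappaVal_nonneg G₁) (le_max_left _ _)
  have hm1 : kappaVal G₁ * ipVal G₁ (fun i j => w1 i j + cc i j) ≤
      max (kappaVal G₁) (kappaVal G₂) * ipVal G₁ (fun i j => w1 i j + cc i j) :=
    mul_le_mul_of_nonneg_right (le_max_left _ _) (ipVal_nonneg _ _)
  have hm2 : kappaVal G₂ * ipVal G₂ (fun i j => w2 i j - cc i j) ≤
      max (kappaVal G₁) (kappaVal G₂) * ipVal G₂ (fun i j => w2 i j - cc i j) :=
    mul_le_mul_of_nonneg_right (le_max_right _ _) (ipVal_nonneg _ _)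
  have hfin : max (kappaVal G₁) (kappaVal G₂) *
      (ipVal G₁ (fun i j => w1 i j + cc i j) + ipVal G₂ (fun i j => w2 i j - cc i j)) ≤
      max (kappaVal G₁) (kappaVal G₂) * ipVal (G₁ ⊔ G₂) w :=
    mul_le_mul_of_nonneg_left hip hK0
  nlinarith [hsdp, k1, k2, hm1, hm2, hfin]

end Aux7
/-- if `G` is the clique `k`-sum of `G₁` and `G₂` with `k ≤ 3`,
then `κ(G) = max(κ(G₁), κ(G₂))`. -/
theorem kappa_clique_sum {n : ℕ} (G₁ G₂ : SimpleGraph (Fin n))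
    (V₁ V₂ : Finset (Fin n))
    (hV : V₁ ∪ V₂ = Finset.univ)
    (hE₁ : ∀ i j, G₁.Adj i j → i ∈ V₁ ∧ j ∈ V₁)
    (hE₂ : ∀ i j, G₂.Adj i j → i ∈ V₂ ∧ j ∈ V₂)
    (hclique₁ : G₁.IsClique ↑(V₁ ∩ V₂)) (hclique₂ : G₂.IsClique ↑(V₁ ∩ V₂))
    (hk : (V₁ ∩ V₂).card ≤ 3) :
    kappaVal (G₁ ⊔ G₂) = max (kappaVal G₁) (kappaVal G₂) := by
  apply le_antisymm
  · show sSup {t | ∃ w : Fin n → Fin n → ℝ, t = sdpVal (G₁ ⊔ G₂) w / ipVal (G₁ ⊔ G₂) w} ≤ _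
    refine csSup_le (ratioSet_nonempty (G₁ ⊔ G₂)) ?_
    rintro t ⟨w, rfl⟩
    rcases eq_or_lt_of_le (ipVal_nonneg (G₁ ⊔ G₂) w) with h0 | hpos
    · rw [← h0, div_zero]
      exact le_trans (kappaVal_nonneg G₁) (le_max_left _ _)
    · rw [div_le_iff₀ hpos]
      exact hard_dir G₁ G₂ V₁ V₂ (V₁ ∩ V₂) hE₁ hE₂ (fun i h1 h2 => Finset.mem_inter.mpr ⟨h1, h2⟩) hclique₁ hclique₂ hk w
  · exact max_le (kappa_le_sup_left G₁ G₂) (kappa_le_sup_right G₁ G₂)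
end

section
/- Let C_p be the circuit (cycle graph) of length p and let c in [-1,1]. The constant vector c·e (all edge entries equal to c) belongs to the elliptope E(C_p) if and only if either p is even, or p is odd and c >= -cos(pi/p). -/
open Finset Real
open scoped Classical Pointwise

/-- The cycle graph `C_p` on `Fin p`, with edges `(i, i+1 mod p)`. -/
def cycleGraph (p : ℕ) : SimpleGraph (Fin p) :=
  SimpleGraph.fromRel (fun i j => j.val = (i.val + 1) % p)

lemma arccos_antitone {x y : ℝ} (h : x ≤ y) : Real.arccos y ≤ Real.arccos x := by
  unfold Real.arccos
  linarith [Real.monotone_arcsin h]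

lemma tri3 (N : Matrix (Fin 3) (Fin 3) ℝ) (hN : N.PosSemidef) (hd : ∀ i, N i i = 1) :
    Real.arccos (N 0 2) ≤ Real.arccos (N 0 1) + Real.arccos (N 1 2) := by
  set a := N 0 1 with ha
  set b := N 0 2 with hb
  set c := N 1 2 with hc
  have hsym : ∀ i j, N j i = N i j := by
    intro i j
    have := hN.1
    rw [Matrix.IsHermitian] at this
    conv_lhs => rw [← this]
    simp [Matrix.conjTranspose_apply]
  have hq : ∀ s t r : ℝ, 0 ≤ s^2 + t^2 + r^2 + 2*a*s*t + 2*b*s*r + 2*c*t*r := by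
    intro s t r
    have h := hN.dotProduct_mulVec_nonneg ![s, t, r]
    simp [dotProduct, Matrix.mulVec, Fin.sum_univ_three, hd, hsym 0 1, hsym 0 2, hsym 1 2,
      ← ha, ← hb, ← hc] at h
    nlinarith [h]
  have ha2 : a^2 ≤ 1 := by nlinarith [hq 1 (-a) 0]
  have hc2 : c^2 ≤ 1 := by nlinarith [hq 0 1 (-c)]
  have hb2 : b^2 ≤ 1 := by nlinarith [hq 1 0 (-b)]
  have hkey : (b - a*c)^2 ≤ (1 - a^2) * (1 - c^2) := by
    have hpoly : ∀ x : ℝ, 0 ≤ (1 - a^2) * (x*x) + (2*(b - a*c)) * x + (1 - c^2) := by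
      intro x
      nlinarith [hq x (-(a*x + c)) 1]
    have := discrim_le_zero hpoly
    rw [discrim] at this
    nlinarith
  have hs : Real.sqrt (1 - a^2) * Real.sqrt (1 - c^2) = Real.sqrt ((1-a^2)*(1-c^2)) := by
    rw [← Real.sqrt_mul (by nlinarith)]
  have hbound : cos (arccos a + arccos c) ≤ b := by
    rw [Real.cos_add, Real.cos_arccos (by nlinarith) (by nlinarith),
      Real.cos_arccos (by nlinarith) (by nlinarith), Real.sin_arccos, Real.sin_arccos, hs]
    have h1 : Real.sqrt ((1-a^2)*(1-c^2)) ^ 2 = (1-a^2)*(1-c^2) := by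
      rw [Real.sq_sqrt (by nlinarith)]
    nlinarith [Real.sqrt_nonneg ((1-a^2)*(1-c^2))]
  rcases le_or_gt (arccos a + arccos c) π with hle | hgt
  · have h1 : arccos b ≤ arccos (cos (arccos a + arccos c)) := arccos_antitone hbound
    rwa [Real.arccos_cos
      (by have := Real.arccos_nonneg a; have := Real.arccos_nonneg c; linarith) hle] at h1
  · exact le_trans (Real.arccos_le_pi b) hgt.le

lemma tri {p : ℕ} (X : Matrix (Fin p) (Fin p) ℝ) (hX : X.PosSemidef) (hd : ∀ i, X i i = 1)
    (i j k : Fin p) :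
    Real.arccos (X i k) ≤ Real.arccos (X i j) + Real.arccos (X j k) := by
  have h3 := tri3 (X.submatrix ![i,j,k] ![i,j,k]) (hX.submatrix _)
    (by intro l; fin_cases l <;> simp [hd])
  simpa using h3

lemma gram_psd {p n : ℕ} (v : Fin p → Fin n → ℝ) :
    (Matrix.of fun i j => ∑ k, v i k * v j k).PosSemidef := by
  have h := Matrix.posSemidef_conjTranspose_mul_self
    (Matrix.of fun (k : Fin n) (i : Fin p) => v i k)
  have heq : (Matrix.of fun i j => ∑ k, v i k * v j k) =
      (Matrix.of fun (k : Fin n) (i : Fin p) => v i k).conjTranspose *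
      (Matrix.of fun (k : Fin n) (i : Fin p) => v i k) := by
    ext i j
    simp [Matrix.mul_apply, Matrix.conjTranspose_apply]
  rw [heq]; exact h

lemma adj_succ {p : ℕ} (n : ℕ) (h : n + 1 < p) :
    (cycleGraph p).Adj ⟨n, by omega⟩ ⟨n+1, h⟩ := by
  rw [cycleGraph, SimpleGraph.fromRel_adj]
  refine ⟨?_, Or.inl ?_⟩
  · intro hc; rw [Fin.mk.injEq] at hc; omega
  · simp [Nat.mod_eq_of_lt h]

lemma adj_wrap {p : ℕ} (hp : 3 ≤ p) :
    (cycleGraph p).Adj ⟨p-1, by omega⟩ ⟨0, by omega⟩ := by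
  rw [cycleGraph, SimpleGraph.fromRel_adj]
  refine ⟨?_, Or.inl ?_⟩
  · intro hc; rw [Fin.mk.injEq] at hc; omega
  · show (0 : ℕ) = (p - 1 + 1) % p
    have : p - 1 + 1 = p := by omega
    rw [this, Nat.mod_self]

lemma adj_val_cases {p : ℕ} {i j : Fin p} (h : (cycleGraph p).Adj i j) :
    (j.val = i.val + 1 ∨ (i.val = p - 1 ∧ j.val = 0)) ∨
    (i.val = j.val + 1 ∨ (j.val = p - 1 ∧ i.val = 0)) := by
  rw [cycleGraph, SimpleGraph.fromRel_adj] at h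
  obtain ⟨hne, hor⟩ := h
  have hi := i.isLt
  have hj := j.isLt
  rcases hor with h1 | h1
  · left
    rcases Nat.lt_or_ge (i.val + 1) p with hlt | hge
    · left; rw [h1, Nat.mod_eq_of_lt hlt]
    · right
      have hip : i.val + 1 = p := by omega
      constructor
      · omega
      · rw [h1, hip, Nat.mod_self]
  · right
    rcases Nat.lt_or_ge (j.val + 1) p with hlt | hge
    · left; rw [h1, Nat.mod_eq_of_lt hlt]
    · right
      have hip : j.val + 1 = p := by omega
      constructor
      · omega
      · rw [h1, hip, Nat.mod_self]

/-- for `c ∈ [-1,1]`, the constant vector `c·e` lies in the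
elliptope `𝓔(C_p)` iff `p` is even, or `p` is odd and `c ≥ -cos(π/p)`. -/
theorem const_mem_elliptope_cycle_iff (p : ℕ) (hp : 3 ≤ p) (c : ℝ)
    (hc : c ∈ Set.Icc (-1 : ℝ) 1) :
    (∃ X : Matrix (Fin p) (Fin p) ℝ, X.PosSemidef ∧ (∀ i, X i i = 1) ∧
        ∀ i j, (cycleGraph p).Adj i j → X i j = c) ↔
    (Even p ∨ (Odd p ∧ -Real.cos (π / p) ≤ c)) := by
  obtain ⟨hc1, hc2⟩ := hc
  constructor
  · rintro ⟨X, hX, hd, he⟩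
    rcases Nat.even_or_odd p with hev | hod
    · exact Or.inl hev
    refine Or.inr ⟨hod, ?_⟩
    set D := Matrix.diagonal (fun i : Fin p => (-1:ℝ)^(i:ℕ)) with hDdef
    have hDH : D.conjTranspose = D := by
      rw [hDdef, Matrix.diagonal_conjTranspose]
      congr
    set Y := D * X * D with hYdef
    have hY : Y.PosSemidef := by
      have h := hX.mul_mul_conjTranspose_same D
      rwa [hDH] at h
    have hYapp : ∀ i j : Fin p, Y i j = (-1:ℝ)^(i:ℕ) * X i j * (-1)^(j:ℕ) := by
      intro i j
      rw [hYdef, Matrix.mul_assoc, hDdef, Matrix.diagonal_mul, Matrix.mul_diagonal, mul_assoc]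
    have hsq : ∀ n : ℕ, ((-1:ℝ)^n) * ((-1:ℝ)^n) = 1 := by
      intro n; rw [← pow_add]; exact Even.neg_one_pow ⟨n, rfl⟩
    have hYd : ∀ i, Y i i = 1 := by
      intro i
      rw [hYapp, hd]
      have := hsq (i : ℕ)
      linarith [hsq (i:ℕ)]
    have chain : ∀ n : ℕ, 1 ≤ n → ∀ hnp : n < p, Real.arccos (Y ⟨0, by omega⟩ ⟨n, hnp⟩) ≤
        n * Real.arccos (-c) := by
      intro n
      induction n with
      | zero => omega
      | succ m ih =>
        intro _ hnp
        have hXm : X ⟨m, by omega⟩ ⟨m+1, hnp⟩ = c := he _ _ (adj_succ m hnp)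
        have hYm : Y ⟨m, by omega⟩ ⟨m+1, hnp⟩ = -c := by
          rw [hYapp, hXm]
          show (-1:ℝ)^m * c * (-1)^(m+1) = -c
          rw [pow_succ]
          linear_combination (-c) * hsq m
        rcases Nat.eq_zero_or_pos m with hm0 | hm1
        · subst hm0
          have : Y ⟨0, by omega⟩ ⟨1, hnp⟩ = -c := by
            have := hYm; convert this using 3
          rw [this]
          simp
        · calc Real.arccos (Y ⟨0, by omega⟩ ⟨m+1, hnp⟩)
              ≤ Real.arccos (Y ⟨0, by omega⟩ ⟨m, by omega⟩) +
                Real.arccos (Y ⟨m, by omega⟩ ⟨m+1, hnp⟩) := tri Y hY hYd _ _ _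
            _ ≤ m * Real.arccos (-c) + Real.arccos (-c) := by
                have h1 := ih hm1 (by omega)
                rw [hYm]
                linarith
            _ = (m+1 : ℕ) * Real.arccos (-c) := by push_cast; ring
    have hfin := chain (p-1) (by omega) (by omega)
    have hY0p : Y ⟨0, by omega⟩ ⟨p-1, by omega⟩ = c := by
      rw [hYapp]
      have hXw : X ⟨0, by omega⟩ ⟨p-1, by omega⟩ = c := he _ _ (adj_wrap hp).symm
      rw [hXw]
      show (-1:ℝ)^(0:ℕ) * c * (-1)^(p-1) = c
      have hev : Even (p-1) := by
        rcases hod with ⟨k, hk⟩; exact ⟨k, by omega⟩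
      rw [hev.neg_one_pow]
      ring
    rw [hY0p, Real.arccos_neg] at hfin
    have hppos : (0:ℝ) < p := by exact_mod_cast (by omega : 0 < p)
    have hpc : ((p-1:ℕ):ℝ) = (p:ℝ) - 1 := by
      have : (1:ℕ) ≤ p := by omega
      push_cast [Nat.cast_sub this]
      ring
    rw [hpc] at hfin
    have hA : Real.arccos c ≤ π - π / p := by
      have h2 : π / p ≤ π - Real.arccos c := by
        rw [div_le_iff₀ hppos]
        nlinarith [hfin]
      linarith
    have hfin2 := Real.cos_le_cos_of_nonneg_of_le_pi (Real.arccos_nonneg c)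
      (show π - π/p ≤ π by
        have : (0:ℝ) ≤ π / p := by positivity
        linarith) hA
    rwa [Real.cos_pi_sub, Real.cos_arccos hc1 hc2] at hfin2
  · rintro (hev | ⟨hod, hge⟩)
    · have hlam : (0:ℝ) ≤ (c+1)/2 := by linarith
      have hmu : (0:ℝ) ≤ (1-c)/2 := by linarith
      refine ⟨Matrix.of fun i j => (c+1)/2 + (1-c)/2 * (-1)^((i:ℕ)+(j:ℕ)), ?_, ?_, ?_⟩
      · have hg := gram_psd (fun i : Fin p =>
          ![Real.sqrt ((c+1)/2), Real.sqrt ((1-c)/2) * (-1)^(i:ℕ)])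
        have heq : (Matrix.of fun i j : Fin p => (c+1)/2 + (1-c)/2 * (-1)^((i:ℕ)+(j:ℕ))) =
            Matrix.of fun i j : Fin p => ∑ k,
              ![Real.sqrt ((c+1)/2), Real.sqrt ((1-c)/2) * (-1)^(i:ℕ)] k *
              ![Real.sqrt ((c+1)/2), Real.sqrt ((1-c)/2) * (-1)^(j:ℕ)] k := by
          ext i j
          simp only [Matrix.of_apply, Fin.sum_univ_two, Matrix.cons_val_zero, Matrix.cons_val_one,
            Matrix.head_cons]
          rw [Real.mul_self_sqrt hlam, pow_add]
          linear_combination (-((-1:ℝ)^(i:ℕ)*(-1)^(j:ℕ))) * Real.sq_sqrt hmu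
        rw [heq]
        exact hg
      · intro i
        simp only [Matrix.of_apply]
        rw [Even.neg_one_pow (⟨(i:ℕ), rfl⟩ : Even ((i:ℕ)+(i:ℕ)))]
        ring
      · intro i j hadj
        have hp2 : p % 2 = 0 := Nat.even_iff.mp hev
        have hlt := i.isLt
        have hodd : ((i:ℕ)+(j:ℕ)) % 2 = 1 := by
          rcases adj_val_cases hadj with (h | ⟨h1, h2⟩) | (h | ⟨h1, h2⟩) <;> omega
        simp only [Matrix.of_apply]
        rw [(Nat.odd_iff.mpr hodd).neg_one_pow]
        ring
    · have hppos : (0:ℝ) < p := by exact_mod_cast (by omega : 0 < p)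
      have hp3 : (3:ℝ) ≤ p := by exact_mod_cast hp
      have hpi := Real.pi_pos
      have hcp_pos : 0 < Real.cos (π/p) := by
        apply Real.cos_pos_of_mem_Ioo
        constructor
        · have : 0 < π / p := by positivity
          linarith
        · rw [div_lt_div_iff₀ hppos (by norm_num)]
          nlinarith
      set cp := Real.cos (π/p) with hcpdef
      have hden : (0:ℝ) < 1 + cp := by linarith
      set lam := (c + cp)/(1 + cp) with hlamdef
      have hlam0 : 0 ≤ lam := div_nonneg (by linarith) hden.le
      have hmu0 : 0 ≤ 1 - lam := by
        have h1 : lam ≤ 1 := by rw [hlamdef, div_le_one hden]; linarith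
        linarith
      set θ := π - π/p with hθdef
      have hcosθ : Real.cos θ = -cp := by rw [hθdef, Real.cos_pi_sub]
      have hvalue : lam + (1-lam)*(-cp) = c := by
        rw [hlamdef]
        field_simp
        ring
      have hwrap : Real.cos (((p-1:ℕ):ℝ)*θ) = -cp := by
        obtain ⟨l, hl⟩ : ∃ l, p = 2*l+3 := by
          rcases hod with ⟨m, hm⟩; exact ⟨m-1, by omega⟩
        have hpc : ((p-1:ℕ):ℝ) = (p:ℝ)-1 := by
          push_cast [Nat.cast_sub (by omega : 1 ≤ p)]; ring
        have hpr : (p:ℝ) = 2*(l:ℝ)+3 := by exact_mod_cast hl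
        have harg : ((p-1:ℕ):ℝ)*θ = (π/p + π) + l*(2*π) := by
          rw [hpc, hθdef, hpr]
          have h0 : (2*(l:ℝ)+3) ≠ 0 := by positivity
          field_simp
          ring
        rw [harg, Real.cos_add_nat_mul_two_pi, Real.cos_add_pi, hcpdef]
      clear_value cp lam θ
      refine ⟨Matrix.of fun i j => lam + (1-lam) * Real.cos (((i:ℕ):ℝ)*θ - ((j:ℕ):ℝ)*θ),
        ?_, ?_, ?_⟩
      · have hg := gram_psd (fun i : Fin p =>
          ![Real.sqrt lam, Real.sqrt (1-lam) * Real.cos (((i:ℕ):ℝ)*θ),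
            Real.sqrt (1-lam) * Real.sin (((i:ℕ):ℝ)*θ)])
        have heq : (Matrix.of fun i j : Fin p =>
            lam + (1-lam) * Real.cos (((i:ℕ):ℝ)*θ - ((j:ℕ):ℝ)*θ)) =
            Matrix.of fun i j : Fin p => ∑ k,
              ![Real.sqrt lam, Real.sqrt (1-lam) * Real.cos (((i:ℕ):ℝ)*θ),
                Real.sqrt (1-lam) * Real.sin (((i:ℕ):ℝ)*θ)] k *
              ![Real.sqrt lam, Real.sqrt (1-lam) * Real.cos (((j:ℕ):ℝ)*θ),
                Real.sqrt (1-lam) * Real.sin (((j:ℕ):ℝ)*θ)] k := by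
          ext i j
          simp only [Matrix.of_apply, Fin.sum_univ_three, Matrix.cons_val_zero, Matrix.cons_val_one,
            Matrix.head_cons, Matrix.cons_val_two, Matrix.tail_cons]
          rw [Real.cos_sub]
          linear_combination (-1 : ℝ) * Real.mul_self_sqrt hlam0 +
            (-(Real.cos (((i:ℕ):ℝ)*θ) * Real.cos (((j:ℕ):ℝ)*θ) +
             Real.sin (((i:ℕ):ℝ)*θ) * Real.sin (((j:ℕ):ℝ)*θ))) * Real.mul_self_sqrt hmu0
        rw [heq]
        exact hg
      · intro i
        simp only [Matrix.of_apply, sub_self, Real.cos_zero]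
        ring
      · intro i j hadj
        simp only [Matrix.of_apply]
        have hswap : ∀ a b : ℝ, Real.cos (a*θ - b*θ) = Real.cos (b*θ - a*θ) := by
          intro a b
          rw [show a*θ - b*θ = -(b*θ - a*θ) by ring, Real.cos_neg]
        have hmain : ∀ i j : Fin p, (j.val = i.val + 1 ∨ (i.val = p - 1 ∧ j.val = 0)) →
            Real.cos (((i:ℕ):ℝ)*θ - ((j:ℕ):ℝ)*θ) = -cp := by
          intro i j h
          rcases h with h | ⟨h1, h2⟩
          · have hj : ((j:ℕ):ℝ) = ((i:ℕ):ℝ) + 1 := by exact_mod_cast h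
            rw [show ((i:ℕ):ℝ)*θ - ((j:ℕ):ℝ)*θ = -θ by rw [hj]; ring, Real.cos_neg, hcosθ]
          · rw [h1, h2]
            norm_num
            exact hwrap
        rcases adj_val_cases hadj with h | h
        · rw [hmain i j h, hvalue]
        · rw [hswap, hmain j i h, hvalue]
end

section
/- The function f(n) = (n/(n-2))·cos(pi/n) is monotone nonincreasing for integers n >= 3. -/
open Real

set_option maxHeartbeats 1000000 in
lemma cycle_constant_antitone_aux (x : ℝ) (hx : 4 ≤ x) :
    ((x + 1) / (x - 1)) * Real.cos (π / (x + 1)) ≤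
      (x / (x - 2)) * Real.cos (π / x) := by
  have hπ : 0 < π := Real.pi_pos
  have hπ15 : π ≤ 3.15 := by linarith [Real.pi_lt_d2]
  have hπsq : π ^ 2 ≤ 9.9225 := by nlinarith
  have hx0 : (0:ℝ) < x := by linarith
  have hx1 : (0:ℝ) < x - 1 := by linarith
  have hx2 : (0:ℝ) < x - 2 := by linarith
  set a : ℝ := π / (x + 1) with ha
  set b : ℝ := π / x with hb
  have ha0 : 0 < a := div_pos hπ (by linarith)
  have hb0 : 0 < b := div_pos hπ hx0
  have hab : a < b := by
    apply div_lt_div_of_pos_left hπ hx0; linarith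
  have hm0 : 0 ≤ (a + b) / 2 := by linarith
  have hd0 : 0 ≤ (b - a) / 2 := by linarith
  have hdpi : (b - a) / 2 ≤ π := by
    have : b ≤ π := by
      rw [hb, div_le_iff₀ hx0]; nlinarith
    linarith
  have hsin1 : Real.sin ((a + b) / 2) ≤ (a + b) / 2 := Real.sin_le hm0
  have hsin2 : Real.sin ((b - a) / 2) ≤ (b - a) / 2 := Real.sin_le hd0
  have hsin2' : 0 ≤ Real.sin ((b - a) / 2) :=
    Real.sin_nonneg_of_nonneg_of_le_pi hd0 hdpi
  have hkey : Real.cos a - Real.cos b ≤ (b ^ 2 - a ^ 2) / 2 := by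
    rw [Real.cos_sub_cos]
    have h1 : -2 * Real.sin ((a + b) / 2) * Real.sin ((a - b) / 2)
        = 2 * Real.sin ((a + b) / 2) * Real.sin ((b - a) / 2) := by
      rw [show (a - b)/2 = -((b - a)/2) by ring, Real.sin_neg]; ring
    rw [h1]
    have : Real.sin ((a + b) / 2) * Real.sin ((b - a) / 2)
        ≤ ((a + b) / 2) * ((b - a) / 2) :=
      mul_le_mul hsin1 hsin2 hsin2' hm0
    nlinarith
  have hcosa : 1 - a ^ 2 / 2 ≤ Real.cos a := Real.one_sub_sq_div_two_le_cos
  have ha2 : a ^ 2 = π ^ 2 / (x + 1) ^ 2 := by rw [ha, div_pow]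
  have hxx : (0:ℝ) < x ^ 2 := by positivity
  have hxx1 : (0:ℝ) < (x + 1) ^ 2 := by positivity
  have hpoly : π ^ 2 * (2 * x ^ 2 + x - 1) ≤ 4 * x * (x + 1) ^ 2 := by
    nlinarith [sq_nonneg (x - 4), hπsq, sq_nonneg π]
  have hdiff2 : b ^ 2 - a ^ 2 = π ^ 2 * (2 * x + 1) / (x ^ 2 * (x + 1) ^ 2) := by
    rw [ha2, hb, div_pow]; field_simp; ring
  have hD : (0:ℝ) < x ^ 2 * (x + 1) ^ 2 := by positivity
  have hgoal : x * (x - 1) * ((b ^ 2 - a ^ 2) / 2) ≤ 2 * Real.cos a := by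
    have hL : x * (x - 1) * ((π ^ 2 * (2 * x + 1) / (x ^ 2 * (x + 1) ^ 2)) / 2)
        = (π ^ 2 * (x - 1) * (2 * x + 1)) / (2 * x * (x + 1) ^ 2) := by
      field_simp
    have hca2 : 2 - π ^ 2 / (x + 1) ^ 2 ≤ 2 * Real.cos a := by
      rw [ha2] at hcosa; linarith
    have hstep : (π ^ 2 * (x - 1) * (2 * x + 1)) / (2 * x * (x + 1) ^ 2)
        ≤ 2 - π ^ 2 / (x + 1) ^ 2 := by
      rw [div_le_iff₀ (by positivity : (0:ℝ) < 2 * x * (x + 1) ^ 2)]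
      have hexp : (2 - π ^ 2 / (x + 1) ^ 2) * (2 * x * (x + 1) ^ 2)
          = 4 * x * (x + 1) ^ 2 - 2 * π ^ 2 * x := by
        field_simp; ring
      rw [hexp]
      nlinarith [hpoly]
    rw [hdiff2, hL]
    linarith
  have hcb : x * (x - 1) * (Real.cos a - (b ^ 2 - a ^ 2) / 2)
      ≤ x * (x - 1) * Real.cos b := by
    have h : Real.cos a - (b ^ 2 - a ^ 2) / 2 ≤ Real.cos b := by linarith
    have hxn : (0:ℝ) ≤ x * (x - 1) := by nlinarith
    exact mul_le_mul_of_nonneg_left h hxn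
  have hid : x * (x - 1) * (Real.cos a - (b ^ 2 - a ^ 2) / 2)
      - (x + 1) * (x - 2) * Real.cos a
      = 2 * Real.cos a - x * (x - 1) * ((b ^ 2 - a ^ 2) / 2) := by ring
  have hmain : (x + 1) * (x - 2) * Real.cos a ≤ x * (x - 1) * Real.cos b := by
    linarith
  rw [div_mul_eq_mul_div, div_mul_eq_mul_div, div_le_div_iff₀ hx1 hx2]
  nlinarith [hmain]

/-- `(n/(n-2))·cos(π/n)` is monotone nonincreasing for
integers `n ≥ 3`. -/
theorem cycle_constant_antitone (n : ℕ) (hn : 3 ≤ n) :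
    (((n : ℝ) + 1) / ((n : ℝ) - 1)) * Real.cos (π / ((n : ℝ) + 1)) ≤
      ((n : ℝ) / ((n : ℝ) - 2)) * Real.cos (π / (n : ℝ)) := by
  rcases eq_or_lt_of_le hn with h3 | h4
  · have hn3 : n = 3 := h3.symm
    subst hn3
    push_cast
    have e2 : π / ((3:ℝ) + 1) = π / 4 := by norm_num
    rw [e2, Real.cos_pi_div_four, Real.cos_pi_div_three]
    have h2 : Real.sqrt 2 ≤ 3 / 2 := by
      nlinarith [Real.sq_sqrt (by norm_num : (0:ℝ) ≤ 2), Real.sqrt_nonneg 2]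
    nlinarith [h2]
  · exact cycle_constant_antitone_aux (n : ℝ) (by exact_mod_cast h4)
end

section
/- The Grothendieck constant of the complete graph K_3 (the triangle) equals 3/2. -/
open Finset Real
open scoped Classical Pointwise

open RealInnerProductSpace

section K3proof

local notation "K3" => (⊤ : SimpleGraph (Fin 3))

lemma edgeSum_K3 (w x : Fin 3 → Fin 3 → ℝ) :
    edgeSum K3 w x = w 0 1 * x 0 1 + w 0 2 * x 0 2 + w 1 2 * x 1 2 := by
  simp [edgeSum, Fin.sum_univ_three, SimpleGraph.top_adj]

/-- the set whose sup is `ipVal` -/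
def ipS (w : Fin 3 → Fin 3 → ℝ) : Set ℝ :=
  {t | ∃ x : Fin 3 → ℝ, (∀ i, x i = 1 ∨ x i = -1) ∧
    t = edgeSum K3 w (fun i j => x i * x j)}

lemma ipVal_eq (w : Fin 3 → Fin 3 → ℝ) : ipVal K3 w = sSup (ipS w) := rfl

/-- the set whose sup is `sdpVal` -/
def sdpS (w : Fin 3 → Fin 3 → ℝ) : Set ℝ :=
  {t | ∃ u : Fin 3 → EuclideanSpace ℝ (Fin 3), (∀ i, ‖u i‖ = 1) ∧
    t = edgeSum K3 w (fun i j => (inner ℝ (u i) (u j) : ℝ))}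

lemma sdpVal_eq (w : Fin 3 → Fin 3 → ℝ) : sdpVal K3 w = sSup (sdpS w) := rfl

lemma mul_le_abs' (a c : ℝ) (h1 : -1 ≤ c) (h2 : c ≤ 1) : a * c ≤ |a| := by
  nlinarith [le_abs_self a, neg_abs_le a]

lemma pm_mul_le_abs (a c : ℝ) (h : c = 1 ∨ c = -1) : a * c ≤ |a| := by
  rcases h with h | h <;> rw [h] <;> norm_num <;>
    linarith [le_abs_self a, neg_abs_le a]

lemma pm_cases (x : Fin 3 → ℝ) (hx : ∀ i, x i = 1 ∨ x i = -1) (i j : Fin 3) :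
    x i * x j = 1 ∨ x i * x j = -1 := by
  rcases hx i with h | h <;> rcases hx j with h' | h' <;> rw [h, h'] <;> norm_num

lemma mem_ipS (w : Fin 3 → Fin 3 → ℝ) (a b c : ℝ)
    (hx : ∀ i, (![a,b,c] : Fin 3 → ℝ) i = 1 ∨ (![a,b,c] : Fin 3 → ℝ) i = -1) :
    w 0 1 * (a * b) + w 0 2 * (a * c) + w 1 2 * (b * c) ∈ ipS w := by
  refine ⟨![a,b,c], hx, ?_⟩
  rw [edgeSum_K3]; norm_num; rfl

lemma memA (w : Fin 3 → Fin 3 → ℝ) : w 0 1 + w 0 2 + w 1 2 ∈ ipS w := by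
  have := mem_ipS w 1 1 1 (by intro i; fin_cases i <;> norm_num)
  simpa using this

lemma memB (w : Fin 3 → Fin 3 → ℝ) : w 0 1 - w 0 2 - w 1 2 ∈ ipS w := by
  have := mem_ipS w 1 1 (-1) (by intro i; fin_cases i <;> norm_num)
  rw [show w 0 1 * (1*1) + w 0 2 * (1*(-1)) + w 1 2 * (1*(-1))
      = w 0 1 - w 0 2 - w 1 2 by ring] at this
  exact this

lemma memC (w : Fin 3 → Fin 3 → ℝ) : -w 0 1 + w 0 2 - w 1 2 ∈ ipS w := by
  have := mem_ipS w 1 (-1) 1 (by intro i; fin_cases i <;> norm_num)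
  rw [show w 0 1 * (1*(-1)) + w 0 2 * (1*1) + w 1 2 * ((-1)*1)
      = -w 0 1 + w 0 2 - w 1 2 by ring] at this
  exact this

lemma memD (w : Fin 3 → Fin 3 → ℝ) : -w 0 1 - w 0 2 + w 1 2 ∈ ipS w := by
  have := mem_ipS w 1 (-1) (-1) (by intro i; fin_cases i <;> norm_num)
  rw [show w 0 1 * (1*(-1)) + w 0 2 * (1*(-1)) + w 1 2 * ((-1)*(-1))
      = -w 0 1 - w 0 2 + w 1 2 by ring] at this
  exact this

lemma ipBdd (w : Fin 3 → Fin 3 → ℝ) : BddAbove (ipS w) := by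
  refine ⟨|w 0 1| + |w 0 2| + |w 1 2|, ?_⟩
  rintro t ⟨x, hx, rfl⟩
  rw [edgeSum_K3]
  have h01 := pm_cases x hx 0 1
  have h02 := pm_cases x hx 0 2
  have h12 := pm_cases x hx 1 2
  have b01 := pm_mul_le_abs (w 0 1) _ h01
  have b02 := pm_mul_le_abs (w 0 2) _ h02
  have b12 := pm_mul_le_abs (w 1 2) _ h12
  linarith

lemma ipVal_nonneg_s14 (w : Fin 3 → Fin 3 → ℝ) : 0 ≤ ipVal K3 w := by
  rw [ipVal_eq]
  have hA := le_csSup (ipBdd w) (memA w)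
  have hB := le_csSup (ipBdd w) (memB w)
  have hC := le_csSup (ipBdd w) (memC w)
  have hD := le_csSup (ipBdd w) (memD w)
  linarith

/-- key geometric inequality for three unit vectors -/
lemma quad (a b c : EuclideanSpace ℝ (Fin 3)) (ha : ‖a‖ = 1) (hb : ‖b‖ = 1)
    (hc : ‖c‖ = 1) :
    0 ≤ 3 + 2 * ((inner ℝ a b : ℝ) + inner ℝ a c + inner ℝ b c) := by
  have h : (0:ℝ) ≤ ⟪a + b + c, a + b + c⟫ := real_inner_self_nonneg
  simp only [inner_add_left, inner_add_right, real_inner_self_eq_norm_sq, ha, hb, hc] at h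
  nlinarith [h, real_inner_comm b a, real_inner_comm c a, real_inner_comm c b]

lemma quad4 (u : Fin 3 → EuclideanSpace ℝ (Fin 3)) (hu : ∀ i, ‖u i‖ = 1) :
    (0 ≤ 3 + 2 * ((inner ℝ (u 0) (u 1) : ℝ) + inner ℝ (u 0) (u 2) + inner ℝ (u 1) (u 2))) ∧
    (0 ≤ 3 + 2 * ((inner ℝ (u 0) (u 1) : ℝ) - inner ℝ (u 0) (u 2) - inner ℝ (u 1) (u 2))) ∧
    (0 ≤ 3 + 2 * (-(inner ℝ (u 0) (u 1) : ℝ) + inner ℝ (u 0) (u 2) - inner ℝ (u 1) (u 2))) ∧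
    (0 ≤ 3 + 2 * (-(inner ℝ (u 0) (u 1) : ℝ) - inner ℝ (u 0) (u 2) + inner ℝ (u 1) (u 2))) := by
  have h1 := quad (u 0) (u 1) (u 2) (hu 0) (hu 1) (hu 2)
  have h2 := quad (u 0) (u 1) (-(u 2)) (hu 0) (hu 1) (by rw [norm_neg]; exact hu 2)
  have h3 := quad (u 0) (-(u 1)) (u 2) (hu 0) (by rw [norm_neg]; exact hu 1) (hu 2)
  have h4 := quad (u 0) (-(u 1)) (-(u 2)) (hu 0) (by rw [norm_neg]; exact hu 1)
    (by rw [norm_neg]; exact hu 2)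
  simp only [inner_neg_left, inner_neg_right, neg_neg] at h2 h3 h4
  exact ⟨h1, by linarith, by linarith, by linarith⟩

lemma sdpBdd (w : Fin 3 → Fin 3 → ℝ) : BddAbove (sdpS w) := by
  refine ⟨|w 0 1| + |w 0 2| + |w 1 2|, ?_⟩
  rintro t ⟨u, hu, rfl⟩
  rw [edgeSum_K3]
  have i01 := abs_real_inner_le_norm (u 0) (u 1)
  have i02 := abs_real_inner_le_norm (u 0) (u 2)
  have i12 := abs_real_inner_le_norm (u 1) (u 2)
  rw [hu 0, hu 1, one_mul] at i01; rw [hu 0, hu 2, one_mul] at i02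
  rw [hu 1, hu 2, one_mul] at i12
  have b01 := mul_le_abs' (w 0 1) _ (abs_le.mp i01).1 (abs_le.mp i01).2
  have b02 := mul_le_abs' (w 0 2) _ (abs_le.mp i02).1 (abs_le.mp i02).2
  have b12 := mul_le_abs' (w 1 2) _ (abs_le.mp i12).1 (abs_le.mp i12).2
  linarith

lemma sdpS_nonempty (w : Fin 3 → Fin 3 → ℝ) : (sdpS w).Nonempty := by
  refine ⟨_, fun _ => EuclideanSpace.single 0 (1:ℝ), fun i => ?_, rfl⟩
  simp [EuclideanSpace.norm_single]

lemma sdp_le (w : Fin 3 → Fin 3 → ℝ) : sdpVal K3 w ≤ 3/2 * ipVal K3 w := by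
  rw [sdpVal_eq]
  refine csSup_le (sdpS_nonempty w) ?_
  rintro t ⟨u, hu, rfl⟩
  rw [edgeSum_K3]
  obtain ⟨h1, h2, h3, h4⟩ := quad4 u hu
  have hA := le_csSup (ipBdd w) (memA w)
  have hB := le_csSup (ipBdd w) (memB w)
  have hC := le_csSup (ipBdd w) (memC w)
  have hD := le_csSup (ipBdd w) (memD w)
  rw [← ipVal_eq] at hA hB hC hD
  nlinarith [mul_nonneg h1 (sub_nonneg.2 hA), mul_nonneg h2 (sub_nonneg.2 hB),
    mul_nonneg h3 (sub_nonneg.2 hC), mul_nonneg h4 (sub_nonneg.2 hD)]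

lemma ratio_le (w : Fin 3 → Fin 3 → ℝ) : sdpVal K3 w / ipVal K3 w ≤ 3/2 := by
  rcases eq_or_lt_of_le (ipVal_nonneg_s14 w) with h | h
  · rw [← h, div_zero]; norm_num
  · rw [div_le_iff₀ h]
    have := sdp_le w
    linarith

/-- the weight achieving the ratio 3/2 -/
def wneg : Fin 3 → Fin 3 → ℝ := fun _ _ => -1

lemma ip_wneg : ipVal K3 wneg = 1 := by
  rw [ipVal_eq]
  apply le_antisymm
  · refine csSup_le ⟨_, memB wneg⟩ ?_
    rintro t ⟨x, hx, rfl⟩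
    rw [edgeSum_K3]
    rcases hx 0 with h0 | h0 <;> rcases hx 1 with h1 | h1 <;> rcases hx 2 with h2 | h2 <;>
      rw [h0, h1, h2] <;> norm_num [wneg]
  · have := le_csSup (ipBdd wneg) (memB wneg)
    have hB : wneg 0 1 - wneg 0 2 - wneg 1 2 = 1 := by norm_num [wneg]
    rwa [hB] at this

lemma sdp_wneg : sdpVal K3 wneg = 3/2 := by
  rw [sdpVal_eq]
  apply le_antisymm
  · refine csSup_le (sdpS_nonempty wneg) ?_
    rintro t ⟨u, hu, rfl⟩
    rw [edgeSum_K3]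
    obtain ⟨h1, -, -, -⟩ := quad4 u hu
    have : wneg 0 1 = -1 := rfl
    simp only [wneg]
    linarith
  · set e := (WithLp.equiv 2 (Fin 3 → ℝ)).symm with he
    set v : Fin 3 → EuclideanSpace ℝ (Fin 3) :=
      ![e ![1, 0, 0], e ![-(1/2), Real.sqrt 3 / 2, 0], e ![-(1/2), -(Real.sqrt 3 / 2), 0]]
      with hv
    have h3 : Real.sqrt 3 ^ 2 = 3 := Real.sq_sqrt (by norm_num)
    have hnorm : ∀ i, ‖v i‖ = 1 := by
      intro i
      fin_cases i <;>
      · rw [hv]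
        rw [EuclideanSpace.norm_eq]
        rw [show (1:ℝ) = Real.sqrt 1 by rw [Real.sqrt_one]]
        congr 1
        simp [he, Fin.sum_univ_three, WithLp.equiv_symm_apply, PiLp.toLp_apply, Real.norm_eq_abs, sq_abs]
        try nlinarith [h3]
    have h01 : (inner ℝ (v 0) (v 1) : ℝ) = -(1/2) := by
      simp [hv, he, PiLp.inner_apply, RCLike.inner_apply, Fin.sum_univ_three,
        WithLp.equiv_symm_apply, PiLp.toLp_apply]
    have h02 : (inner ℝ (v 0) (v 2) : ℝ) = -(1/2) := by
      simp [hv, he, PiLp.inner_apply, RCLike.inner_apply, Fin.sum_univ_three,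
        WithLp.equiv_symm_apply, PiLp.toLp_apply]
    have h12 : (inner ℝ (v 1) (v 2) : ℝ) = -(1/2) := by
      simp [hv, he, PiLp.inner_apply, RCLike.inner_apply, Fin.sum_univ_three,
        WithLp.equiv_symm_apply, PiLp.toLp_apply]
      nlinarith [h3]
    have hval : edgeSum K3 wneg (fun i j => (inner ℝ (v i) (v j) : ℝ)) = 3/2 := by
      rw [edgeSum_K3, h01, h02, h12]
      norm_num [wneg]
    exact le_csSup (sdpBdd wneg) ⟨v, hnorm, hval.symm⟩

end K3proof

/-- the Grothendieck constant of the triangle `K₃` is `3/2`. -/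
theorem kappa_K3 : kappaVal (⊤ : SimpleGraph (Fin 3)) = 3 / 2 := by
  have hset : kappaVal (⊤ : SimpleGraph (Fin 3)) =
      sSup {t | ∃ w : Fin 3 → Fin 3 → ℝ, t = sdpVal ⊤ w / ipVal ⊤ w} := rfl
  rw [hset]
  apply le_antisymm
  · refine csSup_le ⟨_, wneg, rfl⟩ ?_
    rintro t ⟨w, rfl⟩
    exact ratio_le w
  · refine le_csSup ⟨3/2, ?_⟩ ⟨wneg, ?_⟩
    · rintro t ⟨w, rfl⟩
      exact ratio_le w
    · rw [sdp_wneg, ip_wneg]; norm_num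
end

section
/- For the pure clique-web inequality with parameters p, q, r (p - q = 2r + 1, q >= 2, n = p + q), the SDP value at w = -e on the support graph CW^r_p satisfies sdp(CW^r_p, -e) <= q(r+1) + (2r+1)^2/2, and hence the integrality gap kappa(CW^r_p, -e) <= 1 + (2r+1)^2/(q(2r+2)). -/
open Finset Real
open scoped Classical Pointwise

/-- The clique-web support graph `CW^r_p`: a clique on the first `q` vertices,
a complete bipartite graph to the last `p` vertices, and the web `W^r_p`
(complement of the antiweb, i.e. cyclic distance `> r`) on the last `p`. -/
def cwGraph (p q r : ℕ) : SimpleGraph (Fin (q + p)) :=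
  SimpleGraph.fromRel (fun i j =>
    i.val < q ∨ j.val < q ∨
      (r < ((i.val - q) + p - (j.val - q)) % p ∧
       r < ((j.val - q) + p - (i.val - q)) % p))

section CliqueWebAux

open Finset

variable {p q r : ℕ}

lemma cw_adj_iff (i j : Fin (q+p)) :
    (cwGraph p q r).Adj i j ↔ i ≠ j ∧ (i.val < q ∨ j.val < q ∨
      (r < ((i.val - q) + p - (j.val - q)) % p ∧
       r < ((j.val - q) + p - (i.val - q)) % p)) := by
  show (SimpleGraph.fromRel _).Adj i j ↔ _
  rw [SimpleGraph.fromRel_adj]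
  tauto

lemma cw_nonadj_iff (hp : p = q + (2*r+1)) (i j : Fin (q+p)) (hij : i ≠ j) :
    ¬ (cwGraph p q r).Adj i j ↔
      q ≤ i.val ∧ q ≤ j.val ∧
        (max i.val j.val - min i.val j.val ≤ r ∨
         p - (max i.val j.val - min i.val j.val) ≤ r) := by
  have hi := i.isLt
  have hj := j.isLt
  have hne : i.val ≠ j.val := fun h => hij (Fin.ext h)
  rw [cw_adj_iff]
  simp only [ne_eq, hij, not_false_eq_true, true_and, not_or, not_lt, not_and]
  by_cases hiq : q ≤ i.val
  · by_cases hjq : q ≤ j.val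
    · rcases Nat.lt_or_ge i.val j.val with h | h
      · have e1 : ((i.val - q) + p - (j.val - q)) % p = p - (j.val - i.val) := by
          have e : (i.val - q) + p - (j.val - q) = p - (j.val - i.val) := by omega
          rw [e]; exact Nat.mod_eq_of_lt (by omega)
        have e2 : ((j.val - q) + p - (i.val - q)) % p = j.val - i.val := by
          have e : (j.val - q) + p - (i.val - q) = (j.val - i.val) + p := by omega
          rw [e, Nat.add_mod_right]; exact Nat.mod_eq_of_lt (by omega)
        rw [e1, e2]
        constructor
        · rintro ⟨h1, h2, h3⟩; omega
        · rintro ⟨h1, h2, h3⟩; omega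
      · have h' : j.val < i.val := by omega
        have e1 : ((i.val - q) + p - (j.val - q)) % p = i.val - j.val := by
          have e : (i.val - q) + p - (j.val - q) = (i.val - j.val) + p := by omega
          rw [e, Nat.add_mod_right]; exact Nat.mod_eq_of_lt (by omega)
        have e2 : ((j.val - q) + p - (i.val - q)) % p = p - (i.val - j.val) := by
          have e : (j.val - q) + p - (i.val - q) = p - (i.val - j.val) := by omega
          rw [e]; exact Nat.mod_eq_of_lt (by omega)
        rw [e1, e2]
        constructor
        · rintro ⟨h1, h2, h3⟩; omega
        · rintro ⟨h1, h2, h3⟩; omega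
    · constructor
      · rintro ⟨h1, h2, h3⟩; omega
      · rintro ⟨h1, h2, h3⟩; omega
  · constructor
    · rintro ⟨h1, h2, h3⟩; omega
    · rintro ⟨h1, h2, h3⟩; omega

set_option maxHeartbeats 4000000 in
lemma NA_card (hp : p = q + (2*r+1)) (hq : 2 ≤ q) :
    ((univ : Finset (Fin (q+p) × Fin (q+p))).filter
      (fun ij => ij.1 ≠ ij.2 ∧ ¬ (cwGraph p q r).Adj ij.1 ij.2)).card = p * (2*r) := by
  have hp3 : 3 ≤ p := by omega
  conv_rhs => rw [← card_range p, ← card_range (2*r), ← Finset.card_product]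
  apply Finset.card_nbij'
    (i := fun ij : Fin (q+p) × Fin (q+p) =>
      (ij.1.val - q,
       if (if ij.1.val - q < ij.2.val - q then ij.2.val - ij.1.val else p - (ij.1.val - ij.2.val)) ≤ r
       then (if ij.1.val - q < ij.2.val - q then ij.2.val - ij.1.val else p - (ij.1.val - ij.2.val)) - 1
       else (if ij.1.val - q < ij.2.val - q then ij.2.val - ij.1.val else p - (ij.1.val - ij.2.val)) + 2*r - p))
    (j := fun cs : ℕ × ℕ =>
      (⟨q + min cs.1 (p-1), by omega⟩,
       ⟨q + min (if cs.1 + (if cs.2 < r then cs.2 + 1 else cs.2 + p - 2*r) < p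
                 then cs.1 + (if cs.2 < r then cs.2 + 1 else cs.2 + p - 2*r)
                 else cs.1 + (if cs.2 < r then cs.2 + 1 else cs.2 + p - 2*r) - p) (p-1), by omega⟩))
  · rintro ⟨i, j⟩ hmem
    simp only [mem_coe, mem_filter, mem_univ, true_and] at hmem
    obtain ⟨hij, hna⟩ := hmem
    rw [cw_nonadj_iff hp i j hij] at hna
    have hi := i.isLt
    have hj := j.isLt
    have hne : i.val ≠ j.val := fun h => hij (Fin.ext h)
    simp only [mem_coe, mem_product, mem_range]
    constructor
    · omega
    · split_ifs <;> omega
  · rintro ⟨c, s⟩ hmem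
    simp only [mem_coe, mem_product, mem_range] at hmem
    obtain ⟨hc, hs⟩ := hmem
    simp only [mem_coe, mem_filter, mem_univ, true_and]
    have hne : (⟨q + min c (p-1), by omega⟩ : Fin (q+p)) ≠
        ⟨q + min (if c + (if s < r then s + 1 else s + p - 2*r) < p
                 then c + (if s < r then s + 1 else s + p - 2*r)
                 else c + (if s < r then s + 1 else s + p - 2*r) - p) (p-1), by omega⟩ := by
      intro h
      have := congrArg Fin.val h
      simp only at this
      split_ifs at this <;> omega
    refine ⟨hne, ?_⟩
    rw [cw_nonadj_iff hp _ _ hne]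
    simp only
    split_ifs <;> omega
  · rintro ⟨i, j⟩ hmem
    simp only [mem_coe, mem_filter, mem_univ, true_and] at hmem
    obtain ⟨hij, hna⟩ := hmem
    rw [cw_nonadj_iff hp i j hij] at hna
    have hi := i.isLt
    have hj := j.isLt
    have hne : i.val ≠ j.val := fun h => hij (Fin.ext h)
    simp only [Prod.ext_iff, Fin.ext_iff]
    constructor <;> (first | omega | (split_ifs <;> omega))
  · rintro ⟨c, s⟩ hmem
    simp only [mem_coe, mem_product, mem_range] at hmem
    obtain ⟨hc, hs⟩ := hmem
    simp only [Prod.ext_iff]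
    constructor <;> (first | omega | (split_ifs <;> omega))

lemma card_SA (hq : 1 ≤ q) :
    ((univ : Finset (Fin (q+p))).filter (fun i => i.val < q)).card = q := by
  conv_rhs => rw [← card_range q]
  apply Finset.card_nbij' (i := fun i : Fin (q+p) => i.val)
    (j := fun a : ℕ => (⟨min a (q-1), by omega⟩ : Fin (q+p)))
  · intro a ha; simp only [mem_coe, mem_filter, mem_univ, true_and] at ha; simp [mem_range, ha]
  · intro a ha; simp only [mem_coe, mem_range] at ha
    simp only [mem_coe, mem_filter, mem_univ, true_and]; omega
  · intro a ha; simp only [mem_coe, mem_filter, mem_univ, true_and] at ha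
    have := a.isLt
    apply Fin.ext; simp; omega
  · intro a ha; simp only [mem_coe, mem_range] at ha; simp; omega

lemma card_SB (hp0 : 1 ≤ p) :
    ((univ : Finset (Fin (q+p))).filter (fun i => q ≤ i.val)).card = p := by
  conv_rhs => rw [← card_range p]
  apply Finset.card_nbij' (i := fun i : Fin (q+p) => i.val - q)
    (j := fun a : ℕ => (⟨q + min a (p-1), by omega⟩ : Fin (q+p)))
  · intro a ha; simp only [mem_coe, mem_filter, mem_univ, true_and] at ha
    have := a.isLt; simp only [mem_coe, mem_range]; omega
  · intro a ha; simp only [mem_coe, mem_range] at ha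
    simp only [mem_coe, mem_filter, mem_univ, true_and]; omega
  · intro a ha; simp only [mem_coe, mem_filter, mem_univ, true_and] at ha
    have := a.isLt
    apply Fin.ext; simp; omega
  · intro a ha; simp only [mem_coe, mem_range] at ha; simp; omega

lemma sum_ite_count {m : ℕ} (P : Fin m → Fin m → Prop) [∀ i j, Decidable (P i j)] :
    ∑ i : Fin m, ∑ j : Fin m, (if P i j then (1:ℝ) else 0)
      = ((univ.filter (fun ij : Fin m × Fin m => P ij.1 ij.2)).card : ℝ) := by
  classical
  rw [← Finset.sum_product', Finset.univ_product_univ]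
  simp [Finset.sum_boole]

lemma filt_prod {m : ℕ} (A B : Fin m → Prop) [DecidablePred A] [DecidablePred B] :
    (univ.filter (fun ij : Fin m × Fin m => A ij.1 ∧ B ij.2))
      = (univ.filter A) ×ˢ (univ.filter B) := by
  ext ij; simp [mem_product]

lemma filt_offDiag {m : ℕ} (A : Fin m → Prop) [DecidablePred A] :
    (univ.filter (fun ij : Fin m × Fin m => ij.1 ≠ ij.2 ∧ A ij.1 ∧ A ij.2))
      = (univ.filter A).offDiag := by
  ext ij; simp [Finset.mem_offDiag]; tauto

lemma sum_offdiag_two {m : ℕ} (h : Fin m → Fin m → ℝ) (hsymm : ∀ i j, h i j = h j i) :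
    ∑ i, ∑ j, (if i ≠ j then h i j else 0) = 2 * ∑ i, ∑ j, (if i < j then h i j else 0) := by
  have key : ∀ i j : Fin m, (if i ≠ j then h i j else 0)
      = (if i < j then h i j else 0) + (if j < i then h i j else 0) := by
    intro i j
    rcases lt_trichotomy i j with hlt | heq | hgt
    · simp [hlt, hlt.ne, not_lt_of_gt hlt]
    · simp [heq]
    · simp [hgt, hgt.ne', not_lt_of_gt hgt]
  simp_rw [key, Finset.sum_add_distrib]
  have h2 : (∑ i : Fin m, ∑ j : Fin m, (if j < i then h i j else 0))
      = ∑ i : Fin m, ∑ j : Fin m, (if i < j then h i j else 0) := by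
    rw [Finset.sum_comm]
    exact Finset.sum_congr rfl fun i _ => Finset.sum_congr rfl fun j _ => by rw [hsymm]
  rw [h2]; ring

lemma two_mul_edgeSum {m : ℕ} (G : SimpleGraph (Fin m)) (F : Fin m → Fin m → ℝ)
    (hFs : ∀ i j, F i j = F j i) :
    ∑ i, ∑ j, (if i ≠ j then (if G.Adj i j then -1 * F i j else 0) else 0)
      = 2 * edgeSum G (fun _ _ => (-1:ℝ)) F := by
  rw [sum_offdiag_two (fun i j => if G.Adj i j then -1 * F i j else 0) ?_]
  · show _ = 2 * ∑ i, ∑ j, (if i < j ∧ G.Adj i j then -1 * F i j else 0)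
    congr 1
    refine Finset.sum_congr rfl fun i _ => Finset.sum_congr rfl fun j _ => ?_
    by_cases h1 : i < j
    · by_cases h2 : G.Adj i j
      · rw [if_pos h1, if_pos h2, if_pos ⟨h1, h2⟩]
      · rw [if_pos h1, if_neg h2, if_neg (fun h => h2 h.2)]
    · rw [if_neg h1, if_neg (fun h => h1 h.1)]
  · intro i j
    show (if G.Adj i j then -1 * F i j else 0) = (if G.Adj j i then -1 * F j i else 0)
    by_cases hA : G.Adj i j
    · rw [if_pos hA, if_pos hA.symm, hFs]
    · rw [if_neg hA, if_neg (fun h => hA h.symm)]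

lemma sdp_elem_bound (hp : p = q + (2*r+1)) (hq : 2 ≤ q)
    (u : Fin (q+p) → EuclideanSpace ℝ (Fin (q+p))) (hu : ∀ i, ‖u i‖ = 1) :
    edgeSum (cwGraph p q r) (fun _ _ => (-1:ℝ))
        (fun i j => (inner ℝ (u i) (u j) : ℝ))
      ≤ (q : ℝ) * ((r : ℝ) + 1) + (2 * (r : ℝ) + 1) ^ 2 / 2 := by
  classical
  set F : Fin (q+p) → Fin (q+p) → ℝ := fun i j => (inner ℝ (u i) (u j) : ℝ) with hF
  have hF1 : ∀ i, F i i = 1 := by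
    intro i
    simp only [hF, real_inner_self_eq_norm_mul_norm, hu i, one_mul]
  have hFs : ∀ i j, F i j = F j i := fun i j => real_inner_comm _ _
  have hFle : ∀ i j, F i j ≤ 1 := by
    intro i j
    have := real_inner_le_norm (u i) (u j)
    rwa [hu i, hu j, one_mul] at this
  have hQ : 0 ≤ ∑ i, ∑ j, F i j := by
    have e : (inner ℝ (∑ i, u i) (∑ j, u j) : ℝ) = ∑ i, ∑ j, F i j := by
      rw [sum_inner]
      exact Finset.sum_congr rfl fun i _ => inner_sum _ _ _
    rw [← e]
    exact real_inner_self_nonneg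
  have key := two_mul_edgeSum (cwGraph p q r) F hFs
  have split : ∀ i j : Fin (q+p),
      (if i ≠ j then (if (cwGraph p q r).Adj i j then -1 * F i j else 0) else 0)
        = ((if i = j then F i j else 0) - F i j)
          + (if i ≠ j ∧ ¬ (cwGraph p q r).Adj i j then F i j else 0) := by
    intro i j
    by_cases hij : i = j
    · subst hij
      rw [if_neg (by simp), if_pos rfl, if_neg (by simp)]
      ring
    · by_cases hA : (cwGraph p q r).Adj i j
      · rw [if_pos hij, if_pos hA, if_neg hij, if_neg (fun h => h.2 hA)]
        ring
      · rw [if_pos hij, if_neg hA, if_neg hij, if_pos ⟨hij, hA⟩]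
        ring
  rw [Finset.sum_congr rfl (fun i _ => Finset.sum_congr rfl fun j _ => split i j)] at key
  simp only [Finset.sum_add_distrib, Finset.sum_sub_distrib] at key
  have ediag : ∑ i : Fin (q+p), ∑ j : Fin (q+p), (if i = j then F i j else 0)
      = ((q+p : ℕ) : ℝ) := by
    have : ∀ i : Fin (q+p), ∑ j : Fin (q+p), (if i = j then F i j else 0) = F i i := by
      intro i; simp
    rw [Finset.sum_congr rfl (fun i _ => this i)]
    rw [Finset.sum_congr rfl (fun i _ => hF1 i)]
    simp
  have ena : ∑ i : Fin (q+p), ∑ j : Fin (q+p),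
      (if i ≠ j ∧ ¬ (cwGraph p q r).Adj i j then F i j else 0) ≤ ((p * (2*r) : ℕ) : ℝ) := by
    calc ∑ i : Fin (q+p), ∑ j : Fin (q+p),
        (if i ≠ j ∧ ¬ (cwGraph p q r).Adj i j then F i j else 0)
        ≤ ∑ i : Fin (q+p), ∑ j : Fin (q+p),
            (if i ≠ j ∧ ¬ (cwGraph p q r).Adj i j then (1:ℝ) else 0) := by
          refine Finset.sum_le_sum fun i _ => Finset.sum_le_sum fun j _ => ?_
          split_ifs with h
          · exact hFle i j
          · exact le_rfl
      _ = _ := by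
          rw [sum_ite_count (fun i j => i ≠ j ∧ ¬ (cwGraph p q r).Adj i j)]
          rw [NA_card hp hq]
  have hfinal : 2 * edgeSum (cwGraph p q r) (fun _ _ => (-1:ℝ)) F
      ≤ ((q+p : ℕ) : ℝ) + ((p * (2*r) : ℕ) : ℝ) := by
    rw [← key, ediag]
    have := hQ
    linarith [ena, hQ]
  have harith : ((q+p : ℕ) : ℝ) + ((p * (2*r) : ℕ) : ℝ)
      = 2 * ((q : ℝ) * ((r : ℝ) + 1) + (2 * (r : ℝ) + 1) ^ 2 / 2) := by
    subst hp
    push_cast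
    ring
  linarith [hfinal]

lemma ip_elem (hp : p = q + (2*r+1)) (hq : 2 ≤ q) :
    edgeSum (cwGraph p q r) (fun _ _ => (-1:ℝ))
        (fun i j => (if i.val < q then (1:ℝ) else -1) * (if j.val < q then (1:ℝ) else -1))
      = (q : ℝ) * ((r : ℝ) + 1) := by
  classical
  set x : Fin (q+p) → ℝ := fun i => if i.val < q then (1:ℝ) else -1 with hx
  set F : Fin (q+p) → Fin (q+p) → ℝ := fun i j => x i * x j with hF
  have hFs : ∀ i j, F i j = F j i := fun i j => mul_comm _ _
  have key := two_mul_edgeSum (cwGraph p q r) F hFs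
  have split : ∀ i j : Fin (q+p),
      (if i ≠ j then (if (cwGraph p q r).Adj i j then -1 * F i j else 0) else 0)
        = (if i.val < q ∧ q ≤ j.val then (1:ℝ) else 0)
          + (if q ≤ i.val ∧ j.val < q then (1:ℝ) else 0)
          - (if i ≠ j ∧ i.val < q ∧ j.val < q then (1:ℝ) else 0)
          - (if i ≠ j ∧ q ≤ i.val ∧ q ≤ j.val then (1:ℝ) else 0)
          + (if i ≠ j ∧ ¬ (cwGraph p q r).Adj i j then (1:ℝ) else 0) := by
    intro i j
    by_cases hij : i = j
    · subst hij
      have h1 : ¬ (i.val < q ∧ q ≤ i.val) := by omega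
      have h2 : ¬ (q ≤ i.val ∧ i.val < q) := by omega
      rw [if_neg (by simp), if_neg h1, if_neg h2, if_neg (by simp), if_neg (by simp),
        if_neg (by simp)]
      ring
    · have hxi : x i = if i.val < q then (1:ℝ) else -1 := rfl
      by_cases hi : i.val < q
      · by_cases hj : j.val < q
        · have hA : (cwGraph p q r).Adj i j := (cw_adj_iff i j).2 ⟨hij, Or.inl hi⟩
          rw [if_pos hij, if_pos hA, if_neg (by omega), if_neg (by omega),
            if_pos ⟨hij, hi, hj⟩, if_neg (by rintro ⟨-, h, -⟩; omega),
            if_neg (fun h => h.2 hA)]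
          simp only [hF, hx, if_pos hi, if_pos hj]
          ring
        · have hA : (cwGraph p q r).Adj i j := (cw_adj_iff i j).2 ⟨hij, Or.inl hi⟩
          rw [if_pos hij, if_pos hA, if_pos (by omega), if_neg (by omega),
            if_neg (by rintro ⟨-, -, h⟩; omega), if_neg (by rintro ⟨-, h, -⟩; omega),
            if_neg (fun h => h.2 hA)]
          simp only [hF, hx, if_pos hi, if_neg hj]
          ring
      · by_cases hj : j.val < q
        · have hA : (cwGraph p q r).Adj i j := (cw_adj_iff i j).2 ⟨hij, Or.inr (Or.inl hj)⟩
          rw [if_pos hij, if_pos hA, if_neg (by omega), if_pos (by omega),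
            if_neg (by rintro ⟨-, h, -⟩; omega), if_neg (by rintro ⟨-, -, h⟩; omega),
            if_neg (fun h => h.2 hA)]
          simp only [hF, hx, if_neg hi, if_pos hj]
          ring
        · by_cases hA : (cwGraph p q r).Adj i j
          · rw [if_pos hij, if_pos hA, if_neg (by omega), if_neg (by omega),
              if_neg (by rintro ⟨-, h, -⟩; omega), if_pos ⟨hij, by omega, by omega⟩,
              if_neg (fun h => h.2 hA)]
            simp only [hF, hx, if_neg hi, if_neg hj]
            ring
          · rw [if_pos hij, if_neg hA, if_neg (by omega), if_neg (by omega),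
              if_neg (by rintro ⟨-, h, -⟩; omega), if_pos ⟨hij, by omega, by omega⟩,
              if_pos ⟨hij, hA⟩]
            ring
  rw [Finset.sum_congr rfl (fun i _ => Finset.sum_congr rfl fun j _ => split i j)] at key
  simp only [Finset.sum_add_distrib, Finset.sum_sub_distrib] at key
  rw [sum_ite_count (fun i j : Fin (q+p) => i.val < q ∧ q ≤ j.val),
    sum_ite_count (fun i j : Fin (q+p) => q ≤ i.val ∧ j.val < q),
    sum_ite_count (fun i j : Fin (q+p) => i ≠ j ∧ i.val < q ∧ j.val < q),
    sum_ite_count (fun i j : Fin (q+p) => i ≠ j ∧ q ≤ i.val ∧ q ≤ j.val),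
    sum_ite_count (fun i j : Fin (q+p) => i ≠ j ∧ ¬ (cwGraph p q r).Adj i j)] at key
  rw [filt_prod (fun i : Fin (q+p) => i.val < q) (fun j : Fin (q+p) => q ≤ j.val),
    filt_prod (fun i : Fin (q+p) => q ≤ i.val) (fun j : Fin (q+p) => j.val < q),
    filt_offDiag (fun i : Fin (q+p) => i.val < q),
    filt_offDiag (fun i : Fin (q+p) => q ≤ i.val),
    NA_card hp hq] at key
  rw [Finset.card_product, Finset.card_product, Finset.offDiag_card, Finset.offDiag_card,
    card_SA (by omega), card_SB (by omega)] at key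
  have c1 : ((q * q - q : ℕ) : ℝ) = (q:ℝ) * q - q := by
    have : q ≤ q * q := Nat.le_mul_of_pos_left q (by omega)
    push_cast [Nat.cast_sub this]
    ring
  have c2 : ((p * p - p : ℕ) : ℝ) = (p:ℝ) * p - p := by
    have : p ≤ p * p := Nat.le_mul_of_pos_left p (by omega)
    push_cast [Nat.cast_sub this]
    ring
  rw [c1, c2] at key
  have harith : ((q * p : ℕ) : ℝ) + ((p * q : ℕ) : ℝ) - ((q:ℝ) * q - q) - ((p:ℝ) * p - p)
      + ((p * (2*r) : ℕ) : ℝ) = 2 * ((q : ℝ) * ((r : ℝ) + 1)) := by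
    subst hp
    push_cast
    ring
  linarith [key, harith]

end CliqueWebAux


/-- for the pure clique-web inequality (`p = q + 2r + 1`, `q ≥ 2`),
`sdp(CW^r_p, -e) ≤ q(r+1) + (2r+1)²/2`, hence
`κ(CW^r_p, -e) ≤ 1 + (2r+1)²/(q(2r+2))`. -/
theorem cliqueweb_sdp_bound (p q r : ℕ) (hp : p = q + (2 * r + 1)) (hq : 2 ≤ q) :
    sdpVal (cwGraph p q r) (fun _ _ => (-1 : ℝ)) ≤
      (q : ℝ) * ((r : ℝ) + 1) + (2 * (r : ℝ) + 1) ^ 2 / 2 ∧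
    sdpVal (cwGraph p q r) (fun _ _ => (-1 : ℝ)) /
        ipVal (cwGraph p q r) (fun _ _ => (-1 : ℝ)) ≤
      1 + (2 * (r : ℝ) + 1) ^ 2 / ((q : ℝ) * (2 * (r : ℝ) + 2)) := by
  classical
  have hp' : p = q + (2*r+1) := hp
  have hsdp : sdpVal (cwGraph p q r) (fun _ _ => (-1 : ℝ)) ≤
      (q : ℝ) * ((r : ℝ) + 1) + (2 * (r : ℝ) + 1) ^ 2 / 2 := by
    apply Real.sSup_le
    · rintro t ⟨u, hu, rfl⟩
      exact sdp_elem_bound hp' hq u hu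
    · positivity
  refine ⟨hsdp, ?_⟩
  have hbdd : BddAbove {t | ∃ x : Fin (q+p) → ℝ, (∀ i, x i = 1 ∨ x i = -1) ∧
      t = edgeSum (cwGraph p q r) (fun _ _ => (-1:ℝ)) (fun i j => x i * x j)} := by
    refine ⟨((q+p : ℕ) : ℝ) * ((q+p : ℕ) : ℝ), ?_⟩
    rintro t ⟨x, hx, rfl⟩
    show edgeSum _ _ _ ≤ _
    have step : ∀ i : Fin (q+p), ∑ j : Fin (q+p),
        (if i < j ∧ (cwGraph p q r).Adj i j then (-1) * (x i * x j) else 0)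
          ≤ ∑ _j : Fin (q+p), (1:ℝ) := by
      intro i
      refine Finset.sum_le_sum fun j _ => ?_
      split_ifs with h
      · rcases hx i with h1 | h1 <;> rcases hx j with h2 | h2 <;> rw [h1, h2] <;> norm_num
      · norm_num
    calc edgeSum (cwGraph p q r) (fun _ _ => (-1:ℝ)) (fun i j => x i * x j)
        ≤ ∑ _i : Fin (q+p), ∑ _j : Fin (q+p), (1:ℝ) :=
          Finset.sum_le_sum fun i _ => step i
      _ = ((q+p : ℕ) : ℝ) * ((q+p : ℕ) : ℝ) := by
          simp [Finset.sum_const, Finset.card_univ]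
          push_cast
          ring
  have hmem : (q : ℝ) * ((r : ℝ) + 1) ∈ {t | ∃ x : Fin (q+p) → ℝ, (∀ i, x i = 1 ∨ x i = -1) ∧
      t = edgeSum (cwGraph p q r) (fun _ _ => (-1:ℝ)) (fun i j => x i * x j)} := by
    refine ⟨fun i => if i.val < q then (1:ℝ) else -1, fun i => ?_, (ip_elem hp' hq).symm⟩
    by_cases h : i.val < q
    · left; simp [h]
    · right; simp [h]
  have hip : (q : ℝ) * ((r : ℝ) + 1) ≤ ipVal (cwGraph p q r) (fun _ _ => (-1 : ℝ)) :=
    le_csSup hbdd hmem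
  have hqpos : (0:ℝ) < (q:ℝ) * ((r:ℝ)+1) := by
    have h2 : (2:ℝ) ≤ (q:ℝ) := by exact_mod_cast hq
    have hr : (0:ℝ) ≤ (r:ℝ) := Nat.cast_nonneg r
    nlinarith
  calc sdpVal (cwGraph p q r) (fun _ _ => (-1 : ℝ)) / ipVal (cwGraph p q r) (fun _ _ => (-1 : ℝ))
      ≤ ((q : ℝ) * ((r : ℝ) + 1) + (2 * (r : ℝ) + 1) ^ 2 / 2) / ((q:ℝ) * ((r:ℝ)+1)) :=
        div_le_div₀ (by positivity) hsdp hqpos hip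
    _ = 1 + (2 * (r : ℝ) + 1) ^ 2 / ((q : ℝ) * (2 * (r : ℝ) + 2)) := by
        have h1 : (q:ℝ) * ((r:ℝ)+1) ≠ 0 := ne_of_gt hqpos
        have h2 : (q:ℝ) * (2*(r:ℝ)+2) ≠ 0 := by
          intro h
          apply h1
          nlinarith [h]
        field_simp
end
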